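/- arXiv:2202.09585 — 7 statements merged into one kernel-verified Lean document; each statement's English description precedes it below -/
import Mathlib

section
/- Andréief–Heine identity: Let (D, μ) be a measure space, N ≥ 1 an integer, and f_1,…,f_N, g_1,…,g_N : D → ℂ measurable functions such that f_i·g_j is μ-integrable for all i,j and the function (x_1,…,x_N) ↦ det_{1≤i,j≤N}(f_i(x_j)) · det_{1≤i,j≤N}(g_i(x_j)) is integrable on D^N with respect to the product measure μ^N. Then (1/N!) ∫_{D^N} det_{1≤i,j≤N}(f_i(x_j)) · det_{1≤i,j≤N}(g_i(x_j)) dμ^N(x_1,…,x_N) = det_{1≤i,j≤N}( ∫_D f_i(x) g_j(x) dμ(x) ). -/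
open MeasureTheory Matrix Finset

/-- **Andréief–Heine identity.** Let `(D, μ)` be a measure space, `N ≥ 1`, and
`f_1,…,f_N, g_1,…,g_N : D → ℂ` measurable functions such that `f_i · g_j` is `μ`-integrable
for all `i, j`, and the function `(x_1,…,x_N) ↦ det(f_i(x_j)) · det(g_i(x_j))` is integrable
on `D^N` with respect to the product measure `μ^N`. Then
`(1/N!) ∫_{D^N} det(f_i(x_j)) · det(g_i(x_j)) dμ^N = det( ∫_D f_i g_j dμ )`. -/
theorem andreief_heine_identity {D : Type*} [MeasurableSpace D] (μ : Measure D)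
    [SigmaFinite μ] (N : ℕ) (hN : 1 ≤ N) (f g : Fin N → D → ℂ)
    (hf : ∀ i, Measurable (f i)) (hg : ∀ i, Measurable (g i))
    (hfg : ∀ i j, Integrable (fun x => f i x * g j x) μ)
    (hdet : Integrable (fun x : Fin N → D =>
        (Matrix.of fun i j => f i (x j)).det * (Matrix.of fun i j => g i (x j)).det)
      (Measure.pi fun _ => μ)) :
    (N.factorial : ℂ)⁻¹ *
        ∫ x : Fin N → D, (Matrix.of fun i j => f i (x j)).det *
          (Matrix.of fun i j => g i (x j)).det ∂(Measure.pi fun _ => μ)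
      = (Matrix.of fun i j : Fin N => ∫ x, f i x * g j x ∂μ).det := by
  classical
  letI : MeasureSpace D := ⟨μ⟩
  set M : Matrix (Fin N) (Fin N) ℂ := Matrix.of fun i j => ∫ x, f i x * g j x ∂μ with hM
  have hvol : (Measure.pi fun _ : Fin N => μ) = (volume : Measure (Fin N → D)) := by
    rw [volume_pi]; rfl
  -- pointwise expansion of the product of determinants
  have expand : ∀ x : Fin N → D,
      (Matrix.of fun i j => f i (x j)).det * (Matrix.of fun i j => g i (x j)).det
      = ∑ σ : Equiv.Perm (Fin N), ∑ τ : Equiv.Perm (Fin N),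
          ((Equiv.Perm.sign σ : ℤ) : ℂ) * ((Equiv.Perm.sign τ : ℤ) : ℂ) *
            ∏ j, (f (σ j) (x j) * g (τ j) (x j)) := by
    intro x
    rw [Matrix.det_apply', Matrix.det_apply', Finset.sum_mul_sum]
    refine Finset.sum_congr rfl fun σ _ => Finset.sum_congr rfl fun τ _ => ?_
    simp only [Matrix.of_apply, Finset.prod_mul_distrib]
    ring
  -- integrability of each term
  have hterm : ∀ σ τ : Equiv.Perm (Fin N),
      Integrable (fun x : Fin N → D =>
        ((Equiv.Perm.sign σ : ℤ) : ℂ) * ((Equiv.Perm.sign τ : ℤ) : ℂ) *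
          ∏ j, (f (σ j) (x j) * g (τ j) (x j))) (Measure.pi fun _ : Fin N => μ) := by
    intro σ τ
    rw [hvol]
    exact (Integrable.fintype_prod (f := fun j y => f (σ j) y * g (τ j) y)
      (fun j => hfg (σ j) (τ j))).const_mul _
  -- the integral of each term via Fubini
  have hint : ∀ σ τ : Equiv.Perm (Fin N),
      ∫ x : Fin N → D, ((Equiv.Perm.sign σ : ℤ) : ℂ) * ((Equiv.Perm.sign τ : ℤ) : ℂ) *
          ∏ j, (f (σ j) (x j) * g (τ j) (x j)) ∂(Measure.pi fun _ : Fin N => μ)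
      = ((Equiv.Perm.sign σ : ℤ) : ℂ) * ((Equiv.Perm.sign τ : ℤ) : ℂ) *
          ∏ j, M (σ j) (τ j) := by
    intro σ τ
    rw [integral_const_mul,
      integral_fintype_prod_eq_prod (fun j y => f (σ j) y * g (τ j) y)]
    rfl
  have key : ∫ x : Fin N → D, (Matrix.of fun i j => f i (x j)).det *
      (Matrix.of fun i j => g i (x j)).det ∂(Measure.pi fun _ => μ)
      = (N.factorial : ℂ) * M.det := by
    calc ∫ x : Fin N → D, (Matrix.of fun i j => f i (x j)).det *
          (Matrix.of fun i j => g i (x j)).det ∂(Measure.pi fun _ => μ)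
        = ∫ x : Fin N → D, ∑ σ : Equiv.Perm (Fin N), ∑ τ : Equiv.Perm (Fin N),
            ((Equiv.Perm.sign σ : ℤ) : ℂ) * ((Equiv.Perm.sign τ : ℤ) : ℂ) *
              ∏ j, (f (σ j) (x j) * g (τ j) (x j)) ∂(Measure.pi fun _ => μ) := by
          exact integral_congr_ae (Filter.Eventually.of_forall expand)
      _ = ∑ σ : Equiv.Perm (Fin N), ∑ τ : Equiv.Perm (Fin N),
            ∫ x : Fin N → D, ((Equiv.Perm.sign σ : ℤ) : ℂ) * ((Equiv.Perm.sign τ : ℤ) : ℂ) *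
              ∏ j, (f (σ j) (x j) * g (τ j) (x j)) ∂(Measure.pi fun _ => μ) := by
          rw [integral_finset_sum _ (fun σ _ => integrable_finset_sum _ (fun τ _ => hterm σ τ))]
          exact Finset.sum_congr rfl fun σ _ =>
            integral_finset_sum _ (fun τ _ => hterm σ τ)
      _ = ∑ σ : Equiv.Perm (Fin N), ∑ τ : Equiv.Perm (Fin N),
            ((Equiv.Perm.sign σ : ℤ) : ℂ) * ((Equiv.Perm.sign τ : ℤ) : ℂ) *
              ∏ j, M (σ j) (τ j) := by
          exact Finset.sum_congr rfl fun σ _ => Finset.sum_congr rfl fun τ _ => hint σ τ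
      _ = ∑ τ : Equiv.Perm (Fin N), ((Equiv.Perm.sign τ : ℤ) : ℂ) *
            ∑ σ : Equiv.Perm (Fin N), ((Equiv.Perm.sign σ : ℤ) : ℂ) *
              ∏ j, (M.submatrix id τ) (σ j) j := by
          rw [Finset.sum_comm]
          refine Finset.sum_congr rfl fun τ _ => ?_
          rw [Finset.mul_sum]
          refine Finset.sum_congr rfl fun σ _ => ?_
          simp [Matrix.submatrix_apply]
          ring
      _ = ∑ τ : Equiv.Perm (Fin N), ((Equiv.Perm.sign τ : ℤ) : ℂ) *
            (M.submatrix id τ).det := by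
          refine Finset.sum_congr rfl fun τ _ => ?_
          rw [Matrix.det_apply']
      _ = ∑ τ : Equiv.Perm (Fin N), M.det := by
          refine Finset.sum_congr rfl fun τ _ => ?_
          rw [Matrix.det_permute', ← mul_assoc, ← Int.cast_mul,
            Int.units_coe_mul_self τ.sign, Int.cast_one, one_mul]
      _ = (N.factorial : ℂ) * M.det := by
          rw [Finset.sum_const, Finset.card_univ, Fintype.card_perm, Fintype.card_fin,
            nsmul_eq_mul]
  rw [key, ← mul_assoc, inv_mul_cancel₀ (by exact_mod_cast N.factorial_ne_zero), one_mul]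
end

section
/- The coupled matrix model partition function is a determinant of the norm matrix: for any monic polynomials p_0,…,p_{N−1} and q_0,…,q_{N−1} with deg p_k = deg q_k = k, and assuming all the integrals below are absolutely convergent, Z_N = det_{1≤i,j≤N}( ⟨p_{N−i}|ω|q_{N−j}⟩ ). -/
open MeasureTheory Matrix Finset

/-- Vandermonde product `∏_{i<j} (x_i − x_j)` of a real tuple, as a complex number. -/
noncomputable def Delta {n : ℕ} (x : Fin n → ℝ) : ℂ :=
  ∏ i : Fin n, ∏ j ∈ Finset.Ioi i, ((x i : ℂ) - (x j : ℂ))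

/-- Vandermonde product `∏_{α<β} (z_α − z_β)` of a complex tuple. -/
noncomputable def DeltaC {n : ℕ} (z : Fin n → ℂ) : ℂ :=
  ∏ i : Fin n, ∏ j ∈ Finset.Ioi i, (z i - z j)

/-- Integrand of the pairing `⟨f|ω|g⟩`. -/
noncomputable def pairingIntegrand (wL wR : ℝ → ℂ) (ω : ℝ → ℝ → ℂ) (f g : ℝ → ℂ) :
    ℝ × ℝ → ℂ :=
  fun s => wL s.1 * wR s.2 * f s.1 * ω s.1 s.2 * g s.2

/-- The pairing `⟨f|ω|g⟩ = ∫ w_L(x) w_R(y) f(x) ω(x,y) g(y) dx dy`. -/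
noncomputable def pairing (wL wR : ℝ → ℂ) (ω : ℝ → ℝ → ℂ) (f g : ℝ → ℂ) : ℂ :=
  ∫ s : ℝ × ℝ, pairingIntegrand wL wR ω f g s

/-- Integrand of the un-normalized coupled-matrix-model average `I_N[O]`. -/
noncomputable def cmmIntegrand (N : ℕ) (wL wR : ℝ → ℂ) (ω : ℝ → ℝ → ℂ)
    (O : (Fin N → ℝ) → (Fin N → ℝ) → ℂ) : (Fin N → ℝ) × (Fin N → ℝ) → ℂ :=
  fun X => O X.1 X.2 * (∏ i, wL (X.1 i) * wR (X.2 i)) * Delta X.1 *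
    (Matrix.of fun i j => ω (X.1 i) (X.2 j)).det * Delta X.2

/-- The un-normalized average `I_N[O]` of the coupled matrix model. -/
noncomputable def cmmAvg (N : ℕ) (wL wR : ℝ → ℂ) (ω : ℝ → ℝ → ℂ)
    (O : (Fin N → ℝ) → (Fin N → ℝ) → ℂ) : ℂ :=
  ((N.factorial : ℂ) ^ 2)⁻¹ * ∫ X : (Fin N → ℝ) × (Fin N → ℝ), cmmIntegrand N wL wR ω O X

namespace CMMAux

open Equiv Polynomial

/-- The measurable equivalence used for Fubini with a shuffled second coordinate. -/
noncomputable def Phi (N : ℕ) (τ : Equiv.Perm (Fin N)) :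
    (Fin N → ℝ × ℝ) ≃ᵐ (Fin N → ℝ) × (Fin N → ℝ) :=
  (MeasurableEquiv.arrowProdEquivProdArrow ℝ ℝ (Fin N)).trans
    ((MeasurableEquiv.refl (Fin N → ℝ)).prodCongr (MeasurableEquiv.piCongrLeft (fun _ => ℝ) τ))

lemma measurePreserving_Phi (N : ℕ) (τ : Equiv.Perm (Fin N)) :
    MeasurePreserving (Phi N τ) volume volume := by
  have h1 := volume_measurePreserving_arrowProdEquivProdArrow ℝ ℝ (Fin N)
  have h2 := (MeasurePreserving.id (volume : Measure (Fin N → ℝ))).prod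
    ((volume_measurePreserving_piCongrLeft (fun _ : Fin N => ℝ) τ))
  exact h2.comp h1

lemma Phi_fst (N : ℕ) (τ : Equiv.Perm (Fin N)) (z : Fin N → ℝ × ℝ) (i : Fin N) :
    ((Phi N τ) z).1 i = (z i).1 := rfl

lemma Phi_snd (N : ℕ) (τ : Equiv.Perm (Fin N)) (z : Fin N → ℝ × ℝ) (i : Fin N) :
    ((Phi N τ) z).2 (τ i) = (z i).2 := by
  show (MeasurableEquiv.piCongrLeft (fun _ => ℝ) τ) (fun j => (z j).2) (τ i) = (z i).2
  rw [MeasurableEquiv.coe_piCongrLeft]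
  exact Equiv.piCongrLeft_apply_apply _ τ _ i

lemma comp_Phi (N : ℕ) (τ : Equiv.Perm (Fin N)) (K : Fin N → ℝ × ℝ → ℂ) :
    (fun Z : (Fin N → ℝ) × (Fin N → ℝ) => ∏ i, K i (Z.1 i, Z.2 (τ i))) ∘ (Phi N τ)
      = fun z => ∏ i, K i (z i) := by
  funext z
  simp only [Function.comp_apply]
  refine Finset.prod_congr rfl fun i _ => ?_
  rw [Phi_fst, Phi_snd]

lemma key_integrable {N : ℕ} (K : Fin N → ℝ × ℝ → ℂ) (hK : ∀ i, Integrable (K i))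
    (τ : Equiv.Perm (Fin N)) :
    Integrable (fun Z : (Fin N → ℝ) × (Fin N → ℝ) => ∏ i, K i (Z.1 i, Z.2 (τ i))) := by
  rw [← (measurePreserving_Phi N τ).integrable_comp_emb
    (MeasurableEquiv.measurableEmbedding _), comp_Phi]
  exact Integrable.fintype_prod hK

lemma key_integral {N : ℕ} (K : Fin N → ℝ × ℝ → ℂ) (τ : Equiv.Perm (Fin N)) :
    (∫ Z : (Fin N → ℝ) × (Fin N → ℝ), ∏ i, K i (Z.1 i, Z.2 (τ i))) = ∏ i, ∫ s, K i s := by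
  rw [← (measurePreserving_Phi N τ).integral_comp'
    (fun Z : (Fin N → ℝ) × (Fin N → ℝ) => ∏ i, K i (Z.1 i, Z.2 (τ i)))]
  have : ∀ z : Fin N → ℝ × ℝ, ∏ i, K i (((Phi N τ) z).1 i, ((Phi N τ) z).2 (τ i))
      = ∏ i, K i (z i) := fun z => Finset.prod_congr rfl fun i _ => by rw [Phi_fst, Phi_snd]
  simp only [this]
  exact MeasureTheory.integral_fintype_prod_eq_prod K

lemma det_rev {N : ℕ} (p : ℕ → Polynomial ℂ)
    (hp : ∀ k < N, (p k).Monic ∧ (p k).natDegree = k) (v : Fin N → ℝ) :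
    (Matrix.of fun a i : Fin N => (p (N - 1 - (a : ℕ))).eval ((v i : ℂ))).det
      = ((Equiv.Perm.sign (Fin.revPerm : Equiv.Perm (Fin N)) : ℤ) : ℂ) *
        ∏ i : Fin N, ∏ j ∈ Finset.Ioi i, ((v j : ℂ) - (v i : ℂ)) := by
  set U : Matrix (Fin N) (Fin N) ℂ :=
    Matrix.of fun i (a : Fin N) => (p (a : ℕ)).eval ((v i : ℂ)) with hU
  have h1 : (Matrix.of fun a i : Fin N => (p (N - 1 - (a : ℕ))).eval ((v i : ℂ)))
      = (Uᵀ).submatrix Fin.revPerm id := by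
    ext a i
    have hval : ((Fin.revPerm a : Fin N) : ℕ) = N - 1 - (a : ℕ) := by
      simp [Fin.revPerm, Fin.rev]
      omega
    simp only [hU, Matrix.submatrix_apply, Matrix.transpose_apply, Matrix.of_apply, id_eq, hval]
  rw [h1, Matrix.det_permute, Matrix.det_transpose,
    ← Matrix.det_eval_matrixOfPolynomials_eq_det_vandermonde (fun i => ((v i : ℂ)))
      (fun a : Fin N => p (a : ℕ)) (fun a => (hp a a.isLt).2) (fun a => (hp a a.isLt).1),
    Matrix.det_vandermonde]

lemma delta_prod {N : ℕ} (v : Fin N → ℝ) :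
    Delta v = (∏ i : Fin N, ∏ _j ∈ Finset.Ioi i, (-1 : ℂ)) *
      ∏ i : Fin N, ∏ j ∈ Finset.Ioi i, ((v j : ℂ) - (v i : ℂ)) := by
  unfold Delta
  rw [← Finset.prod_mul_distrib]
  refine Finset.prod_congr rfl fun i _ => ?_
  rw [← Finset.prod_mul_distrib]
  exact Finset.prod_congr rfl fun j _ => by ring

lemma delta_mul_delta {N : ℕ} (p q : ℕ → Polynomial ℂ)
    (hp : ∀ k < N, (p k).Monic ∧ (p k).natDegree = k)
    (hq : ∀ k < N, (q k).Monic ∧ (q k).natDegree = k)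
    (X Y : Fin N → ℝ) :
    Delta X * Delta Y =
      (Matrix.of fun a i : Fin N => (p (N - 1 - (a : ℕ))).eval ((X i : ℂ))).det *
      (Matrix.of fun b j : Fin N => (q (N - 1 - (b : ℕ))).eval ((Y j : ℂ))).det := by
  set c : ℂ := ∏ i : Fin N, ∏ _j ∈ Finset.Ioi i, (-1 : ℂ) with hc_def
  set s : ℂ := ((Equiv.Perm.sign (Fin.revPerm : Equiv.Perm (Fin N)) : ℤ) : ℂ) with hs_def
  have hc : c * c = 1 := by
    rw [hc_def, ← Finset.prod_mul_distrib]
    refine Finset.prod_eq_one fun i _ => ?_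
    rw [← Finset.prod_mul_distrib]
    exact Finset.prod_eq_one fun j _ => by norm_num
  have hs : s * s = 1 := by
    rw [hs_def, ← Int.cast_mul, ← Units.val_mul, Int.units_mul_self, Units.val_one,
      Int.cast_one]
  rw [delta_prod X, delta_prod Y, det_rev p hp X, det_rev q hq Y, ← hc_def, ← hs_def]
  set PX : ℂ := ∏ i : Fin N, ∏ j ∈ Finset.Ioi i, ((X j : ℂ) - (X i : ℂ))
  set PY : ℂ := ∏ i : Fin N, ∏ j ∈ Finset.Ioi i, ((Y j : ℂ) - (Y i : ℂ))
  calc c * PX * (c * PY) = (c * c) * (PX * PY) := by ring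
    _ = (s * s) * (PX * PY) := by rw [hc, hs]
    _ = s * PX * (s * PY) := by ring

lemma sum_perm {N : ℕ} (M : Matrix (Fin N) (Fin N) ℂ) :
    (∑ σ : Equiv.Perm (Fin N), ∑ τ : Equiv.Perm (Fin N), ∑ ρ : Equiv.Perm (Fin N),
      (((Equiv.Perm.sign σ : ℤ) : ℂ) * ((Equiv.Perm.sign τ : ℤ) : ℂ) *
        ((Equiv.Perm.sign ρ : ℤ) : ℂ)) * ∏ i, M (σ i) (ρ (τ i)))
      = (N.factorial : ℂ) ^ 2 * M.det := by
  have inner : ∀ σ τ : Equiv.Perm (Fin N),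
      (∑ ρ : Equiv.Perm (Fin N),
        (((Equiv.Perm.sign σ : ℤ) : ℂ) * ((Equiv.Perm.sign τ : ℤ) : ℂ) *
          ((Equiv.Perm.sign ρ : ℤ) : ℂ)) * ∏ i, M (σ i) (ρ (τ i))) = M.det := by
    intro σ τ
    have hsum := Equiv.sum_comp (Equiv.mulRight (σ * τ⁻¹))
      (fun ρ : Equiv.Perm (Fin N) =>
        (((Equiv.Perm.sign σ : ℤ) : ℂ) * ((Equiv.Perm.sign τ : ℤ) : ℂ) *
          ((Equiv.Perm.sign ρ : ℤ) : ℂ)) * ∏ i, M (σ i) (ρ (τ i)))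
    rw [← hsum]
    have hstep : ∀ π : Equiv.Perm (Fin N),
        (((Equiv.Perm.sign σ : ℤ) : ℂ) * ((Equiv.Perm.sign τ : ℤ) : ℂ) *
          ((Equiv.Perm.sign (π * (σ * τ⁻¹)) : ℤ) : ℂ)) *
            ∏ i, M (σ i) ((π * (σ * τ⁻¹)) (τ i))
        = ((Equiv.Perm.sign π : ℤ) : ℂ) * ∏ i, Mᵀ (π i) i := by
      intro π
      have happ : ∀ i, (π * (σ * τ⁻¹)) (τ i) = π (σ i) := by
        intro i
        simp [Equiv.Perm.mul_apply]
      have hprod : (∏ i, M (σ i) ((π * (σ * τ⁻¹)) (τ i))) = ∏ j, M j (π j) := by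
        rw [Finset.prod_congr rfl fun i _ => by rw [happ i]]
        exact Equiv.prod_comp σ (fun j => M j (π j))
      have hsign : Equiv.Perm.sign σ * Equiv.Perm.sign τ * Equiv.Perm.sign (π * (σ * τ⁻¹))
          = Equiv.Perm.sign π := by
        rw [Equiv.Perm.sign_mul, Equiv.Perm.sign_mul, Equiv.Perm.sign_inv]
        rcases Int.units_eq_one_or (Equiv.Perm.sign σ) with h1 | h1 <;>
          rcases Int.units_eq_one_or (Equiv.Perm.sign τ) with h2 | h2 <;>
            simp [h1, h2]
      have hcoef : (((Equiv.Perm.sign σ : ℤ) : ℂ) * ((Equiv.Perm.sign τ : ℤ) : ℂ) *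
          ((Equiv.Perm.sign (π * (σ * τ⁻¹)) : ℤ) : ℂ)) = ((Equiv.Perm.sign π : ℤ) : ℂ) := by
        rw [← Int.cast_mul, ← Int.cast_mul, ← Units.val_mul, ← Units.val_mul, hsign]
      rw [hprod, hcoef]
      congr 1
    calc (∑ π : Equiv.Perm (Fin N),
          (((Equiv.Perm.sign σ : ℤ) : ℂ) * ((Equiv.Perm.sign τ : ℤ) : ℂ) *
            ((Equiv.Perm.sign ((Equiv.mulRight (σ * τ⁻¹)) π) : ℤ) : ℂ)) *
              ∏ i, M (σ i) (((Equiv.mulRight (σ * τ⁻¹)) π) (τ i)))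
        = ∑ π : Equiv.Perm (Fin N), ((Equiv.Perm.sign π : ℤ) : ℂ) * ∏ i, Mᵀ (π i) i := by
          refine Finset.sum_congr rfl fun π _ => ?_
          simp only [Equiv.coe_mulRight]
          exact hstep π
      _ = Mᵀ.det := (Matrix.det_apply' _).symm
      _ = M.det := Matrix.det_transpose _
  rw [Finset.sum_congr rfl fun σ _ => Finset.sum_congr rfl fun τ _ => inner σ τ]
  simp [Finset.sum_const, Finset.card_univ, Fintype.card_perm]
  ring

lemma triple_factor {α : Type*} [Fintype α] (a b c : α → ℂ) :
    (∑ σ : α, a σ) * ((∑ τ : α, b τ) * (∑ ρ : α, c ρ))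
      = ∑ σ : α, ∑ τ : α, ∑ ρ : α, a σ * (b τ * c ρ) := by
  rw [Finset.sum_mul]
  refine Finset.sum_congr rfl fun σ _ => ?_
  rw [Finset.sum_mul, Finset.mul_sum]
  refine Finset.sum_congr rfl fun τ _ => ?_
  rw [Finset.mul_sum, Finset.mul_sum]

end CMMAux


/-- The coupled matrix model partition function is a determinant of the norm matrix:
for monic polynomials `p_0,…,p_{N−1}` and `q_0,…,q_{N−1}` with `deg p_k = deg q_k = k`,
assuming all integrals are absolutely convergent,
`Z_N = det_{1≤i,j≤N}( ⟨p_{N−i}|ω|q_{N−j}⟩ )`. -/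
theorem coupled_partition_function_det (N : ℕ) (hN : 1 ≤ N)
    (wL wR : ℝ → ℂ) (ω : ℝ → ℝ → ℂ)
    (hwL : Measurable wL) (hwR : Measurable wR) (hω : Measurable (Function.uncurry ω))
    (p q : ℕ → Polynomial ℂ)
    (hp : ∀ k < N, (p k).Monic ∧ (p k).natDegree = k)
    (hq : ∀ k < N, (q k).Monic ∧ (q k).natDegree = k)
    (hZ : Integrable (cmmIntegrand N wL wR ω fun _ _ => 1))
    (hpair : ∀ i < N, ∀ j < N, Integrable (pairingIntegrand wL wR ω
      (fun x => (p i).eval (x : ℂ)) (fun y => (q j).eval (y : ℂ)))) :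
    cmmAvg N wL wR ω (fun _ _ => 1)
      = (Matrix.of fun i j : Fin N =>
          pairing wL wR ω (fun x => (p (N - 1 - (i : ℕ))).eval (x : ℂ))
            (fun y => (q (N - 1 - (j : ℕ))).eval (y : ℂ))).det := by
  classical
  set H : Fin N → Fin N → ℝ × ℝ → ℂ := fun a b =>
    pairingIntegrand wL wR ω (fun x => (p (N - 1 - (a : ℕ))).eval (x : ℂ))
      (fun y => (q (N - 1 - (b : ℕ))).eval (y : ℂ)) with hH_def
  set M : Matrix (Fin N) (Fin N) ℂ := Matrix.of fun a b : Fin N =>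
    pairing wL wR ω (fun x => (p (N - 1 - (a : ℕ))).eval (x : ℂ))
      (fun y => (q (N - 1 - (b : ℕ))).eval (y : ℂ)) with hM_def
  have hHint : ∀ a b : Fin N, Integrable (H a b) := by
    intro a b
    have ha : N - 1 - (a : ℕ) < N := by omega
    have hb : N - 1 - (b : ℕ) < N := by omega
    exact hpair _ ha _ hb
  have hHM : ∀ a b : Fin N, (∫ s : ℝ × ℝ, H a b s) = M a b := fun a b => rfl
  -- pointwise expansion of the integrand in terms of the pairing integrands
  have hpoint : cmmIntegrand N wL wR ω (fun _ _ => 1) = fun Z =>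
      ∑ σ : Equiv.Perm (Fin N), ∑ τ : Equiv.Perm (Fin N), ∑ ρ : Equiv.Perm (Fin N),
        (((Equiv.Perm.sign σ : ℤ) : ℂ) * ((Equiv.Perm.sign τ : ℤ) : ℂ) *
          ((Equiv.Perm.sign ρ : ℤ) : ℂ)) * ∏ i, H (σ i) (ρ (τ i)) (Z.1 i, Z.2 (τ i)) := by
    funext Z
    obtain ⟨X, Y⟩ := Z
    set A : Matrix (Fin N) (Fin N) ℂ :=
      Matrix.of fun a i => wL (X i) * (p (N - 1 - (a : ℕ))).eval ((X i : ℂ)) with hA_def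
    set B : Matrix (Fin N) (Fin N) ℂ :=
      Matrix.of fun b j => wR (Y j) * (q (N - 1 - (b : ℕ))).eval ((Y j : ℂ)) with hB_def
    set Om : Matrix (Fin N) (Fin N) ℂ := Matrix.of fun i j => ω (X i) (Y j) with hOm_def
    have hL : cmmIntegrand N wL wR ω (fun _ _ => 1) (X, Y) = A.det * (Om.det * B.det) := by
      have h1 : A.det = (∏ i, wL (X i)) *
          (Matrix.of fun a i : Fin N => (p (N - 1 - (a : ℕ))).eval ((X i : ℂ))).det :=
        Matrix.det_mul_row _ _
      have h2 : B.det = (∏ j, wR (Y j)) *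
          (Matrix.of fun b j : Fin N => (q (N - 1 - (b : ℕ))).eval ((Y j : ℂ))).det :=
        Matrix.det_mul_row _ _
      have h3 := CMMAux.delta_mul_delta p q hp hq X Y
      show (1 : ℂ) * (∏ i, wL (X i) * wR (Y i)) * Delta X * Om.det * Delta Y
        = A.det * (Om.det * B.det)
      rw [Finset.prod_mul_distrib, h1, h2]
      calc (1 : ℂ) * ((∏ i, wL (X i)) * ∏ i, wR (Y i)) * Delta X * Om.det * Delta Y
          = ((∏ i, wL (X i)) * ∏ i, wR (Y i)) * ((Delta X * Delta Y) * Om.det) := by ring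
        _ = _ := by rw [h3]; ring
    rw [hL]
    have hAdet : A.det = ∑ σ : Equiv.Perm (Fin N),
        ((Equiv.Perm.sign σ : ℤ) : ℂ) * ∏ i, A (σ i) i := Matrix.det_apply' A
    have hOmdet : Om.det = ∑ τ : Equiv.Perm (Fin N),
        ((Equiv.Perm.sign τ : ℤ) : ℂ) * ∏ i, Om i (τ i) := by
      rw [← Matrix.det_transpose Om, Matrix.det_apply']
      rfl
    have hBdet : B.det = ∑ ρ : Equiv.Perm (Fin N),
        ((Equiv.Perm.sign ρ : ℤ) : ℂ) * ∏ j, B (ρ j) j := Matrix.det_apply' B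
    rw [hAdet, hOmdet, hBdet, CMMAux.triple_factor]
    refine Finset.sum_congr rfl fun σ _ => Finset.sum_congr rfl fun τ _ =>
      Finset.sum_congr rfl fun ρ _ => ?_
    have h1 : (∏ j, B (ρ j) j) = ∏ i, B (ρ (τ i)) (τ i) :=
      (Equiv.prod_comp τ fun j => B (ρ j) j).symm
    have h2 : (∏ i, H (σ i) (ρ (τ i)) (X i, Y (τ i)))
        = (∏ i, A (σ i) i) * ((∏ i, Om i (τ i)) * (∏ i, B (ρ (τ i)) (τ i))) := by
      rw [← Finset.prod_mul_distrib, ← Finset.prod_mul_distrib]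
      refine Finset.prod_congr rfl fun i _ => ?_
      simp only [hH_def, pairingIntegrand, hA_def, hB_def, hOm_def, Matrix.of_apply]
      ring
    rw [h1, h2]
    ring
  -- integrate term by term
  have hint3 : ∀ σ τ ρ : Equiv.Perm (Fin N),
      Integrable (fun Z : (Fin N → ℝ) × (Fin N → ℝ) =>
        (((Equiv.Perm.sign σ : ℤ) : ℂ) * ((Equiv.Perm.sign τ : ℤ) : ℂ) *
          ((Equiv.Perm.sign ρ : ℤ) : ℂ)) * ∏ i, H (σ i) (ρ (τ i)) (Z.1 i, Z.2 (τ i))) :=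
    fun σ τ ρ => (CMMAux.key_integrable (fun i => H (σ i) (ρ (τ i)))
      (fun i => hHint _ _) τ).const_mul _
  have hI : (∫ Z : (Fin N → ℝ) × (Fin N → ℝ), cmmIntegrand N wL wR ω (fun _ _ => 1) Z)
      = (N.factorial : ℂ) ^ 2 * M.det := by
    rw [hpoint]
    rw [integral_finset_sum _ (fun σ _ => integrable_finset_sum _ fun τ _ =>
      integrable_finset_sum _ fun ρ _ => hint3 σ τ ρ)]
    rw [← CMMAux.sum_perm M]
    refine Finset.sum_congr rfl fun σ _ => ?_
    rw [integral_finset_sum _ (fun τ _ => integrable_finset_sum _ fun ρ _ => hint3 σ τ ρ)]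
    refine Finset.sum_congr rfl fun τ _ => ?_
    rw [integral_finset_sum _ (fun ρ _ => hint3 σ τ ρ)]
    refine Finset.sum_congr rfl fun ρ _ => ?_
    rw [integral_const_mul, CMMAux.key_integral (fun i => H (σ i) (ρ (τ i))) τ]
    congr 1
  show ((N.factorial : ℂ) ^ 2)⁻¹ *
    (∫ Z : (Fin N → ℝ) × (Fin N → ℝ), cmmIntegrand N wL wR ω (fun _ _ => 1) Z) = M.det
  rw [hI]
  have hfac : ((N.factorial : ℂ)) ≠ 0 := Nat.cast_ne_zero.mpr (Nat.factorial_ne_zero N)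
  field_simp
end

section
/- If P_0,…,P_{N−1} and Q_0,…,Q_{N−1} are biorthogonal monic polynomials with normalization constants h_0,…,h_{N−1}, and all the integrals involved are absolutely convergent, then the partition function factorizes as Z_N = ∏_{i=0}^{N−1} h_i. -/
open MeasureTheory Matrix Finset

/-! ### Auxiliary lemmas -/

/-- Row expansion of a determinant. -/
lemma detRowExpansion {n : ℕ} (M : Matrix (Fin n) (Fin n) ℂ) :
    M.det = ∑ σ : Equiv.Perm (Fin n), ((Equiv.Perm.sign σ : ℤ) : ℂ) * ∏ i, M i (σ i) := by
  rw [← Matrix.det_transpose, Matrix.det_apply]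
  refine Finset.sum_congr rfl fun σ _ => ?_
  simp [Matrix.transpose_apply, Units.smul_def, zsmul_eq_mul]

lemma vandermonde_sign {n : ℕ} (v : Fin n → ℂ) :
    (∏ i : Fin n, ∏ j ∈ Finset.Ioi i, (v i - v j)) =
      (-1 : ℂ) ^ (∑ i : Fin n, (Finset.Ioi i).card) * (Matrix.vandermonde v).det := by
  rw [Matrix.det_vandermonde, ← Finset.prod_pow_eq_pow_sum, ← Finset.prod_mul_distrib]
  refine Finset.prod_congr rfl fun i _ => ?_
  calc ∏ j ∈ Finset.Ioi i, (v i - v j) = ∏ j ∈ Finset.Ioi i, (-1 : ℂ) * (v j - v i) := by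
        refine Finset.prod_congr rfl fun j _ => by ring
    _ = (-1 : ℂ) ^ (Finset.Ioi i).card * ∏ j ∈ Finset.Ioi i, (v j - v i) := by
        rw [Finset.prod_mul_distrib, Finset.prod_const]

lemma Delta_mul_Delta {n : ℕ} (x y : Fin n → ℝ) (p q : Fin n → Polynomial ℂ)
    (hp : ∀ i : Fin n, (p i).Monic ∧ (p i).natDegree = (i : ℕ))
    (hq : ∀ i : Fin n, (q i).Monic ∧ (q i).natDegree = (i : ℕ)) :
    Delta x * Delta y =
      (Matrix.of fun i j => (p j).eval (x i : ℂ)).det *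
      (Matrix.of fun i j => (q j).eval (y i : ℂ)).det := by
  have hx := vandermonde_sign (fun i => (x i : ℂ))
  have hy := vandermonde_sign (fun i => (y i : ℂ))
  have hdx := Matrix.det_eval_matrixOfPolynomials_eq_det_vandermonde (fun i => (x i : ℂ)) p
    (fun i => (hp i).2) (fun i => (hp i).1)
  have hdy := Matrix.det_eval_matrixOfPolynomials_eq_det_vandermonde (fun i => (y i : ℂ)) q
    (fun i => (hq i).2) (fun i => (hq i).1)
  rw [Delta, Delta, hx, hy, hdx, hdy]
  ring_nf
  rw [show ((∑ i : Fin n, #(Finset.Ioi i)) * 2) = 2 * (∑ i : Fin n, #(Finset.Ioi i)) from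
    mul_comm _ _, pow_mul, neg_one_sq, one_pow, mul_one]

/-- Andréief-type decoupling: the integral of a permuted product of two-variable
integrable functions factorizes. -/
lemma integral_perm_prod {N : ℕ} (τ : Equiv.Perm (Fin N)) (g : Fin N → ℝ × ℝ → ℂ)
    (hg : ∀ i, Integrable (g i)) :
    Integrable (fun X : (Fin N → ℝ) × (Fin N → ℝ) => ∏ i, g i (X.1 i, X.2 (τ i))) ∧
    (∫ X : (Fin N → ℝ) × (Fin N → ℝ), ∏ i, g i (X.1 i, X.2 (τ i))) = ∏ i, ∫ s, g i s := by
  set F : (Fin N → ℝ) × (Fin N → ℝ) → ℂ := fun X => ∏ i, g i (X.1 i, X.2 (τ i)) with hF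
  let e₁ : (Fin N → ℝ × ℝ) ≃ᵐ (Fin N → ℝ) × (Fin N → ℝ) :=
    MeasurableEquiv.arrowProdEquivProdArrow ℝ ℝ (Fin N)
  let e₂ : (Fin N → ℝ) × (Fin N → ℝ) ≃ᵐ (Fin N → ℝ) × (Fin N → ℝ) :=
    (MeasurableEquiv.refl (Fin N → ℝ)).prodCongr (MeasurableEquiv.piCongrLeft (fun _ => ℝ) τ)
  let e : (Fin N → ℝ × ℝ) ≃ᵐ (Fin N → ℝ) × (Fin N → ℝ) := e₁.trans e₂
  have mp1 : MeasurePreserving e₁ volume volume :=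
    volume_measurePreserving_arrowProdEquivProdArrow ℝ ℝ (Fin N)
  have mp2 : MeasurePreserving e₂ volume volume :=
    (MeasurePreserving.id (volume : Measure (Fin N → ℝ))).prod
      (volume_measurePreserving_piCongrLeft (fun _ => ℝ) τ)
  have mp : MeasurePreserving e volume volume := mp2.comp mp1
  have hcomp : ∀ z : Fin N → ℝ × ℝ, F (e z) = ∏ i, g i (z i) := by
    intro z
    refine Finset.prod_congr rfl fun i _ => ?_
    have h1 : (e z).1 i = (z i).1 := rfl
    have h2 : (e z).2 (τ i) = (z i).2 := by
      show (MeasurableEquiv.piCongrLeft (fun _ => ℝ) τ) (fun j => (z j).2) (τ i) = (z i).2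
      rw [MeasurableEquiv.coe_piCongrLeft, Equiv.piCongrLeft_apply_apply]
    rw [h1, h2]
  have hInt2 : Integrable (fun z : Fin N → ℝ × ℝ => ∏ i, g i (z i)) :=
    Integrable.fintype_prod hg
  have hIntF : Integrable F := by
    rw [← mp.integrable_comp_emb e.measurableEmbedding]
    exact hInt2.congr (Filter.Eventually.of_forall fun z => (hcomp z).symm)
  refine ⟨hIntF, ?_⟩
  calc (∫ X, F X) = ∫ z : Fin N → ℝ × ℝ, F (e z) := (mp.integral_comp' F).symm
    _ = ∫ z : Fin N → ℝ × ℝ, ∏ i, g i (z i) :=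
        integral_congr_ae (Filter.Eventually.of_forall hcomp)
    _ = ∏ i, ∫ s, g i s := integral_fintype_prod_eq_prod (ι := Fin N) (fun _ => g _)

/-- Pointwise expansion of the coupled-matrix-model integrand into a triple sum over
permutations. -/
lemma cmm_pointwise (N : ℕ) (wL wR : ℝ → ℂ) (ω : ℝ → ℝ → ℂ) (P Q : ℕ → Polynomial ℂ)
    (hP : ∀ k < N, (P k).Monic ∧ (P k).natDegree = k)
    (hQ : ∀ k < N, (Q k).Monic ∧ (Q k).natDegree = k)
    (X : (Fin N → ℝ) × (Fin N → ℝ)) :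
    cmmIntegrand N wL wR ω (fun _ _ => 1) X =
      ∑ σ : Equiv.Perm (Fin N), ∑ τ : Equiv.Perm (Fin N), ∑ ρ : Equiv.Perm (Fin N),
        ((Equiv.Perm.sign σ : ℤ) : ℂ) * ((Equiv.Perm.sign τ : ℤ) : ℂ) *
          ((Equiv.Perm.sign ρ : ℤ) : ℂ) *
        ∏ i, pairingIntegrand wL wR ω (fun s => (P (σ i : ℕ)).eval (s : ℂ))
          (fun s => (Q (ρ (τ i) : ℕ)).eval (s : ℂ)) (X.1 i, X.2 (τ i)) := by
  obtain ⟨x, y⟩ := X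
  have step1 : cmmIntegrand N wL wR ω (fun _ _ => 1) (x, y) =
      (∏ i, wL (x i) * wR (y i)) *
        ((Matrix.of fun (i j : Fin N) => (P (j : ℕ)).eval (x i : ℂ)).det *
         (Matrix.of fun (i j : Fin N) => (Q (j : ℕ)).eval (y i : ℂ)).det) *
        (Matrix.of fun (i j : Fin N) => ω (x i) (y j)).det := by
    rw [← Delta_mul_Delta x y (fun i => P i) (fun i => Q i)
      (fun i => hP i i.isLt) (fun i => hQ i i.isLt)]
    simp only [cmmIntegrand]
    ring
  rw [step1, detRowExpansion (Matrix.of fun (i j : Fin N) => (P (j : ℕ)).eval (x i : ℂ)),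
    detRowExpansion (Matrix.of fun (i j : Fin N) => (Q (j : ℕ)).eval (y i : ℂ)),
    detRowExpansion (Matrix.of fun (i j : Fin N) => ω (x i) (y j))]
  simp only [Finset.sum_mul, Finset.mul_sum, Matrix.of_apply]
  rw [Finset.sum_congr rfl fun σ _ => Finset.sum_comm, Finset.sum_comm]
  refine Finset.sum_congr rfl fun σ _ => Finset.sum_congr rfl fun τ _ =>
    Finset.sum_congr rfl fun ρ _ => ?_
  have hprod : (∏ i, pairingIntegrand wL wR ω (fun s => (P (σ i : ℕ)).eval (s : ℂ))
      (fun s => (Q (ρ (τ i) : ℕ)).eval (s : ℂ)) ((x, y).1 i, (x, y).2 (τ i))) =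
      (∏ i, wL (x i)) * (∏ i, wR (y i)) * (∏ i, (P (σ i : ℕ)).eval (x i : ℂ)) *
        (∏ i, ω (x i) (y (τ i))) * (∏ i, (Q (ρ i : ℕ)).eval (y i : ℂ)) := by
    simp only [pairingIntegrand, Finset.prod_mul_distrib]
    rw [Equiv.prod_comp τ (fun j => wR (y j)),
      Equiv.prod_comp τ (fun j => (Q (ρ j : ℕ)).eval (y j : ℂ))]
  rw [hprod, Finset.prod_mul_distrib]
  ring

/-- If `P_0,…,P_{N−1}` and `Q_0,…,Q_{N−1}` are biorthogonal monic polynomials with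
normalization constants `h_0,…,h_{N−1}`, and all the integrals involved are absolutely
convergent, then the partition function factorizes as `Z_N = ∏_{i=0}^{N−1} h_i`. -/
theorem coupled_partition_function_factorizes (N : ℕ) (hN : 1 ≤ N)
    (wL wR : ℝ → ℂ) (ω : ℝ → ℝ → ℂ)
    (hwL : Measurable wL) (hwR : Measurable wR) (hω : Measurable (Function.uncurry ω))
    (P Q : ℕ → Polynomial ℂ) (h : ℕ → ℂ)
    (hP : ∀ k < N, (P k).Monic ∧ (P k).natDegree = k)
    (hQ : ∀ k < N, (Q k).Monic ∧ (Q k).natDegree = k)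
    (hZ : Integrable (cmmIntegrand N wL wR ω fun _ _ => 1))
    (hpairInt : ∀ i < N, ∀ j < N, Integrable (pairingIntegrand wL wR ω
      (fun x => (P i).eval (x : ℂ)) (fun y => (Q j).eval (y : ℂ))))
    (hbo : ∀ i < N, ∀ j < N,
      pairing wL wR ω (fun x => (P i).eval (x : ℂ)) (fun y => (Q j).eval (y : ℂ))
        = if i = j then h i else 0) :
    cmmAvg N wL wR ω (fun _ _ => 1) = ∏ i ∈ Finset.range N, h i := by
  classical
  set H : ℂ := ∏ i ∈ Finset.range N, h i with hH
  -- the permutation-indexed summands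
  set term : Equiv.Perm (Fin N) → Equiv.Perm (Fin N) → Equiv.Perm (Fin N) →
      ((Fin N → ℝ) × (Fin N → ℝ)) → ℂ := fun σ τ ρ X =>
    ((Equiv.Perm.sign σ : ℤ) : ℂ) * ((Equiv.Perm.sign τ : ℤ) : ℂ) *
      ((Equiv.Perm.sign ρ : ℤ) : ℂ) *
      ∏ i, pairingIntegrand wL wR ω (fun s => (P (σ i : ℕ)).eval (s : ℂ))
        (fun s => (Q (ρ (τ i) : ℕ)).eval (s : ℂ)) (X.1 i, X.2 (τ i)) with hterm
  have hkey : ∀ σ τ ρ : Equiv.Perm (Fin N), Integrable (term σ τ ρ) ∧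
      (∫ X : (Fin N → ℝ) × (Fin N → ℝ), term σ τ ρ X) =
        ((Equiv.Perm.sign σ : ℤ) : ℂ) * ((Equiv.Perm.sign τ : ℤ) : ℂ) *
          ((Equiv.Perm.sign ρ : ℤ) : ℂ) * (if σ = ρ * τ then H else 0) := by
    intro σ τ ρ
    have hg : ∀ i : Fin N, Integrable (pairingIntegrand wL wR ω
        (fun s => (P (σ i : ℕ)).eval (s : ℂ)) (fun s => (Q (ρ (τ i) : ℕ)).eval (s : ℂ))) :=
      fun i => hpairInt _ (σ i).isLt _ (ρ (τ i)).isLt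
    obtain ⟨hI, hval⟩ := integral_perm_prod τ _ hg
    have hpv : (∏ i : Fin N, ∫ s : ℝ × ℝ, pairingIntegrand wL wR ω
        (fun s => (P (σ i : ℕ)).eval (s : ℂ)) (fun s => (Q (ρ (τ i) : ℕ)).eval (s : ℂ)) s) =
        if σ = ρ * τ then H else 0 := by
      have hbo' : ∀ i : Fin N, (∫ s : ℝ × ℝ, pairingIntegrand wL wR ω
          (fun s => (P (σ i : ℕ)).eval (s : ℂ)) (fun s => (Q (ρ (τ i) : ℕ)).eval (s : ℂ)) s) =
          if (σ i : ℕ) = (ρ (τ i) : ℕ) then h (σ i : ℕ) else 0 :=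
        fun i => hbo _ (σ i).isLt _ (ρ (τ i)).isLt
      by_cases hc : σ = ρ * τ
      · rw [if_pos hc]
        have hci : ∀ i, (σ i : ℕ) = (ρ (τ i) : ℕ) := fun i => by rw [hc]; rfl
        calc (∏ i : Fin N, ∫ s : ℝ × ℝ, pairingIntegrand wL wR ω
              (fun s => (P (σ i : ℕ)).eval (s : ℂ))
              (fun s => (Q (ρ (τ i) : ℕ)).eval (s : ℂ)) s)
            = ∏ i : Fin N, h ((σ i : ℕ)) := by
              refine Finset.prod_congr rfl fun i _ => ?_
              rw [hbo' i, if_pos (hci i)]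
          _ = ∏ i : Fin N, h (i : ℕ) := Equiv.prod_comp σ (fun i => h (i : ℕ))
          _ = H := Fin.prod_univ_eq_prod_range h N
      · rw [if_neg hc]
        have : ∃ i, σ i ≠ ρ (τ i) := by
          by_contra hall
          push_neg at hall
          exact hc (Equiv.ext hall)
        obtain ⟨i, hi⟩ := this
        refine Finset.prod_eq_zero (Finset.mem_univ i) ?_
        rw [hbo' i, if_neg (fun hval => hi (Fin.val_injective hval))]
    refine ⟨hI.const_mul _, ?_⟩
    rw [show (fun X : (Fin N → ℝ) × (Fin N → ℝ) => term σ τ ρ X) = term σ τ ρ from rfl, hterm]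
    rw [MeasureTheory.integral_const_mul, hval, hpv]
  -- rewrite the integrand pointwise and exchange integral and sums
  have hpt : (cmmIntegrand N wL wR ω fun _ _ => 1) =
      fun X => ∑ σ : Equiv.Perm (Fin N), ∑ τ : Equiv.Perm (Fin N), ∑ ρ : Equiv.Perm (Fin N),
        term σ τ ρ X := by
    funext X
    exact cmm_pointwise N wL wR ω P Q hP hQ X
  have hswap : (∫ X : (Fin N → ℝ) × (Fin N → ℝ), cmmIntegrand N wL wR ω (fun _ _ => 1) X) =
      ∑ σ : Equiv.Perm (Fin N), ∑ τ : Equiv.Perm (Fin N), ∑ ρ : Equiv.Perm (Fin N),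
        ∫ X : (Fin N → ℝ) × (Fin N → ℝ), term σ τ ρ X := by
    rw [hpt, integral_finset_sum _ (fun σ _ => integrable_finset_sum _
      (fun τ _ => integrable_finset_sum _ fun ρ _ => (hkey σ τ ρ).1))]
    refine Finset.sum_congr rfl fun σ _ => ?_
    rw [integral_finset_sum _ (fun τ _ => integrable_finset_sum _ fun ρ _ => (hkey σ τ ρ).1)]
    exact Finset.sum_congr rfl fun τ _ =>
      integral_finset_sum _ fun ρ _ => (hkey σ τ ρ).1
  have hsum : (∑ σ : Equiv.Perm (Fin N), ∑ τ : Equiv.Perm (Fin N), ∑ ρ : Equiv.Perm (Fin N),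
      ∫ X : (Fin N → ℝ) × (Fin N → ℝ), term σ τ ρ X) =
      (N.factorial : ℂ) * ((N.factorial : ℂ) * H) := by
    simp only [fun σ τ ρ => (hkey σ τ ρ).2]
    rw [Finset.sum_comm]
    rw [Finset.sum_congr rfl fun τ _ => Finset.sum_comm]
    have hinner : ∀ τ ρ : Equiv.Perm (Fin N),
        (∑ σ : Equiv.Perm (Fin N), ((Equiv.Perm.sign σ : ℤ) : ℂ) *
          ((Equiv.Perm.sign τ : ℤ) : ℂ) * ((Equiv.Perm.sign ρ : ℤ) : ℂ) *
          (if σ = ρ * τ then H else 0)) = H := by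
      intro τ ρ
      have : ∀ σ : Equiv.Perm (Fin N), ((Equiv.Perm.sign σ : ℤ) : ℂ) *
          ((Equiv.Perm.sign τ : ℤ) : ℂ) * ((Equiv.Perm.sign ρ : ℤ) : ℂ) *
          (if σ = ρ * τ then H else 0) =
          if σ = ρ * τ then ((Equiv.Perm.sign σ : ℤ) : ℂ) * ((Equiv.Perm.sign τ : ℤ) : ℂ) *
            ((Equiv.Perm.sign ρ : ℤ) : ℂ) * H else 0 := by
        intro σ
        by_cases hc : σ = ρ * τ <;> simp [hc]
      rw [Finset.sum_congr rfl fun σ _ => this σ, Finset.sum_ite_eq' Finset.univ (ρ * τ)]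
      rw [if_pos (Finset.mem_univ _), Equiv.Perm.sign_mul]
      rcases Int.units_eq_one_or (Equiv.Perm.sign τ) with h1 | h1 <;>
        rcases Int.units_eq_one_or (Equiv.Perm.sign ρ) with h2 | h2 <;>
        simp [h1, h2]
    rw [Finset.sum_congr rfl fun τ _ => Finset.sum_congr rfl fun ρ _ => hinner τ ρ]
    simp [Finset.sum_const, Finset.card_univ, Fintype.card_perm, Fintype.card_fin,
      nsmul_eq_mul, mul_assoc]
  have hfac : (N.factorial : ℂ) ≠ 0 := Nat.cast_ne_zero.mpr (Nat.factorial_ne_zero N)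
  rw [cmmAvg, hswap, hsum]
  field_simp
end

section
/- Schur polynomial average in bialternant form: Let λ and μ be partitions with at most N parts, i.e. λ_1 ≥ … ≥ λ_N ≥ 0 and μ_1 ≥ … ≥ μ_N ≥ 0 are integers. Assuming all the integrals below are absolutely convergent, (1/N!²) ∫_{ℝ^N×ℝ^N} (∏_{i=1}^N w_L(x_{L,i}) w_R(x_{R,i})) · det_{1≤i,j≤N}( x_{L,i}^{λ_j+N−j} ) · det_{1≤i,j≤N} ω(x_{L,i}, x_{R,j}) · det_{1≤i,j≤N}( x_{R,i}^{μ_j+N−j} ) dX_L dX_R = det_{1≤i,j≤N}( ⟨x^{λ_i+N−i}|ω|x^{μ_j+N−j}⟩ ), where ⟨x^a|ω|x^b⟩ denotes the pairing of the monomials x ↦ x^a and y ↦ y^b. -/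
open MeasureTheory Matrix Finset

namespace SchurAux
variable {N : ℕ}

lemma piCongr_eq (σ : Equiv.Perm (Fin N)) :
    ⇑(MeasurableEquiv.piCongrLeft (fun _ : Fin N => ℝ) σ.symm) = fun x => x ∘ σ := by
  funext x j
  rw [MeasurableEquiv.coe_piCongrLeft]
  have h := Equiv.piCongrLeft_apply_apply (fun _ : Fin N => ℝ) σ.symm x (σ j)
  simpa using h

noncomputable def prodPermEquiv (σ τ : Equiv.Perm (Fin N)) :
    ((Fin N → ℝ) × (Fin N → ℝ)) ≃ᵐ ((Fin N → ℝ) × (Fin N → ℝ)) :=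
  (MeasurableEquiv.piCongrLeft (fun _ : Fin N => ℝ) σ.symm).prodCongr
    (MeasurableEquiv.piCongrLeft (fun _ : Fin N => ℝ) τ.symm)

lemma prodPermEquiv_apply (σ τ : Equiv.Perm (Fin N)) (X : (Fin N → ℝ) × (Fin N → ℝ)) :
    prodPermEquiv σ τ X = (X.1 ∘ σ, X.2 ∘ τ) := by
  obtain ⟨x, y⟩ := X
  show ((MeasurableEquiv.piCongrLeft (fun _ : Fin N => ℝ) σ.symm) x,
    (MeasurableEquiv.piCongrLeft (fun _ : Fin N => ℝ) τ.symm) y) = _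
  rw [piCongr_eq, piCongr_eq]

lemma mp_prodPerm (σ τ : Equiv.Perm (Fin N)) :
    MeasurePreserving (⇑(prodPermEquiv σ τ)) volume volume :=
  (volume_measurePreserving_piCongrLeft (fun _ : Fin N => ℝ) σ.symm).prod
    (volume_measurePreserving_piCongrLeft (fun _ : Fin N => ℝ) τ.symm)

lemma integral_comp_perm (σ τ : Equiv.Perm (Fin N)) (g : (Fin N → ℝ) × (Fin N → ℝ) → ℂ) :
    ∫ X : (Fin N → ℝ) × (Fin N → ℝ), g (X.1 ∘ σ, X.2 ∘ τ) = ∫ X, g X := by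
  have h := (mp_prodPerm σ τ).integral_comp' g
  simp_rw [prodPermEquiv_apply] at h
  exact h

lemma integrable_comp_perm (σ τ : Equiv.Perm (Fin N)) {g : (Fin N → ℝ) × (Fin N → ℝ) → ℂ}
    (hg : Integrable g) :
    Integrable (fun X : (Fin N → ℝ) × (Fin N → ℝ) => g (X.1 ∘ σ, X.2 ∘ τ)) := by
  have h := ((mp_prodPerm σ τ).integrable_comp_emb
    (prodPermEquiv σ τ).measurableEmbedding).2 hg
  have he : (g ∘ ⇑(prodPermEquiv σ τ)) = fun X => g (X.1 ∘ σ, X.2 ∘ τ) := by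
    funext X; simp [Function.comp, prodPermEquiv_apply]
  rwa [he] at h

lemma integrable_pairProd (k : Fin N → ℝ × ℝ → ℂ) (hk : ∀ i, Integrable (k i)) :
    Integrable (fun X : (Fin N → ℝ) × (Fin N → ℝ) => ∏ i, k i (X.1 i, X.2 i)) := by
  apply ((volume_measurePreserving_arrowProdEquivProdArrow ℝ ℝ (Fin N)).integrable_comp_emb
    (MeasurableEquiv.arrowProdEquivProdArrow ℝ ℝ (Fin N)).measurableEmbedding).1
  have he : ((fun X : (Fin N → ℝ) × (Fin N → ℝ) => ∏ i, k i (X.1 i, X.2 i)) ∘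
      ⇑(MeasurableEquiv.arrowProdEquivProdArrow ℝ ℝ (Fin N))) = fun z => ∏ i, k i (z i) := by
    funext z
    simp [MeasurableEquiv.arrowProdEquivProdArrow, Equiv.arrowProdEquivProdArrow]
  rw [he]
  exact Integrable.fintype_prod hk

lemma integral_pairProd (k : Fin N → ℝ × ℝ → ℂ) :
    ∫ X : (Fin N → ℝ) × (Fin N → ℝ), ∏ i, k i (X.1 i, X.2 i) = ∏ i, ∫ s, k i s := by
  rw [← (volume_measurePreserving_arrowProdEquivProdArrow ℝ ℝ (Fin N)).integral_comp'
    (fun X : (Fin N → ℝ) × (Fin N → ℝ) => ∏ i, k i (X.1 i, X.2 i))]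
  have he : (fun z : Fin N → ℝ × ℝ =>
      ∏ i, k i (((MeasurableEquiv.arrowProdEquivProdArrow ℝ ℝ (Fin N)) z).1 i,
        ((MeasurableEquiv.arrowProdEquivProdArrow ℝ ℝ (Fin N)) z).2 i)) =
      fun z => ∏ i, k i (z i) := by
    funext z
    simp [MeasurableEquiv.arrowProdEquivProdArrow, Equiv.arrowProdEquivProdArrow]
  rw [he]
  exact integral_fintype_prod_eq_prod k

variable (wL wR : ℝ → ℂ) (ω : ℝ → ℝ → ℂ) (f g : Fin N → ℝ → ℂ)

noncomputable def Bfun (X : (Fin N → ℝ) × (Fin N → ℝ)) : ℂ :=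
  (∏ i, wL (X.1 i) * f i (X.1 i)) *
    (Matrix.of fun i j => ω (X.1 i) (X.2 j)).det * (∏ i, wR (X.2 i) * g i (X.2 i))

lemma B_expand (X : (Fin N → ℝ) × (Fin N → ℝ)) :
    Bfun wL wR ω f g X = ∑ π : Equiv.Perm (Fin N), ((Equiv.Perm.sign π : ℤ) : ℂ) *
      ∏ i, pairingIntegrand wL wR ω (f (π i)) (g i) (X.1 (π i), X.2 i) := by
  obtain ⟨x, y⟩ := X
  simp only [Bfun]
  rw [Matrix.det_apply']
  rw [Finset.mul_sum, Finset.sum_mul]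
  refine Finset.sum_congr rfl fun π _ => ?_
  have h2 : ∀ i : Fin N, pairingIntegrand wL wR ω (f (π i)) (g i) (x (π i), y i)
      = (wL (x (π i))) * (f (π i) (x (π i))) * ((Matrix.of fun i j => ω (x i) (y j)) (π i) i)
        * (wR (y i)) * (g i (y i)) := by
    intro i; simp only [pairingIntegrand, Matrix.of_apply]; ring
  simp only [h2, Finset.prod_mul_distrib]
  rw [Equiv.prod_comp π (fun i => wL (x i)), Equiv.prod_comp π (fun i => f i (x i))]
  ring

lemma det_expand (x y : Fin N → ℝ) :
    (Matrix.of fun i j => wL (x i) * f j (x i)).det *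
      (Matrix.of fun i j => ω (x i) (y j)).det *
      (Matrix.of fun i j => wR (y i) * g j (y i)).det
    = ∑ σ : Equiv.Perm (Fin N), ∑ τ : Equiv.Perm (Fin N), Bfun wL wR ω f g (x ∘ σ, y ∘ τ) := by
  rw [Matrix.det_apply' (Matrix.of fun i j => wL (x i) * f j (x i)),
    Matrix.det_apply' (Matrix.of fun i j => wR (y i) * g j (y i))]
  rw [Finset.sum_mul, Finset.sum_mul]
  refine Finset.sum_congr rfl fun σ _ => ?_
  rw [Finset.mul_sum]
  refine Finset.sum_congr rfl fun τ _ => ?_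
  have hsub : (Matrix.of fun i j => ω ((x ∘ σ) i) ((y ∘ τ) j)).det
      = ((Equiv.Perm.sign σ : ℤ) : ℂ) * (((Equiv.Perm.sign τ : ℤ) : ℂ) *
        (Matrix.of fun i j => ω (x i) (y j)).det) := by
    have e1 : (Matrix.of fun i j => ω ((x ∘ σ) i) ((y ∘ τ) j))
        = ((Matrix.of fun i j => ω (x i) (y j)).submatrix id ⇑τ).submatrix ⇑σ id := rfl
    rw [e1, Matrix.det_permute, Matrix.det_permute']
  simp only [Bfun]
  rw [hsub]
  simp only [Matrix.of_apply, Function.comp_apply]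
  ring

lemma term_integrable (hpair : ∀ i j, Integrable (pairingIntegrand wL wR ω (f i) (g j)))
    (π : Equiv.Perm (Fin N)) :
    Integrable (fun X : (Fin N → ℝ) × (Fin N → ℝ) =>
      ∏ i, pairingIntegrand wL wR ω (f (π i)) (g i) (X.1 (π i), X.2 i)) := by
  have h := integrable_comp_perm π 1
    (integrable_pairProd (fun i => pairingIntegrand wL wR ω (f (π i)) (g i))
      (fun i => hpair (π i) i))
  simpa [Function.comp] using h

lemma B_integrable (hpair : ∀ i j, Integrable (pairingIntegrand wL wR ω (f i) (g j))) :
    Integrable (Bfun wL wR ω f g) := by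
  have he : Bfun wL wR ω f g = fun X => ∑ π : Equiv.Perm (Fin N),
      ((Equiv.Perm.sign π : ℤ) : ℂ) *
        ∏ i, pairingIntegrand wL wR ω (f (π i)) (g i) (X.1 (π i), X.2 i) :=
    funext (B_expand wL wR ω f g)
  rw [he]
  exact integrable_finset_sum _ fun π _ =>
    ((term_integrable wL wR ω f g hpair π).const_mul _)

lemma B_integral (hpair : ∀ i j, Integrable (pairingIntegrand wL wR ω (f i) (g j))) :
    ∫ X : (Fin N → ℝ) × (Fin N → ℝ), Bfun wL wR ω f g X
      = (Matrix.of fun i j => pairing wL wR ω (f i) (g j)).det := by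
  simp_rw [B_expand wL wR ω f g]
  rw [integral_finset_sum _ fun π _ => ((term_integrable wL wR ω f g hpair π).const_mul _)]
  rw [Matrix.det_apply']
  refine Finset.sum_congr rfl fun π _ => ?_
  rw [integral_const_mul]
  congr 1
  have h := integral_comp_perm π 1 (fun X : (Fin N → ℝ) × (Fin N → ℝ) =>
    ∏ i, pairingIntegrand wL wR ω (f (π i)) (g i) (X.1 i, X.2 i))
  simp only [Equiv.Perm.coe_one, Function.comp_id, Function.comp_apply, id_eq] at h
  rw [h, integral_pairProd]
  simp only [Matrix.of_apply, pairing]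

lemma main_general (hpair : ∀ i j, Integrable (pairingIntegrand wL wR ω (f i) (g j))) :
    ∫ X : (Fin N → ℝ) × (Fin N → ℝ),
      (∏ i, wL (X.1 i) * wR (X.2 i)) *
        (Matrix.of fun i j => f j (X.1 i)).det *
        (Matrix.of fun i j => ω (X.1 i) (X.2 j)).det *
        (Matrix.of fun i j => g j (X.2 i)).det
    = ((N.factorial : ℂ)) ^ 2 * (Matrix.of fun i j => pairing wL wR ω (f i) (g j)).det := by
  have hBint := B_integrable wL wR ω f g hpair
  have hpt : ∀ X : (Fin N → ℝ) × (Fin N → ℝ),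
      (∏ i, wL (X.1 i) * wR (X.2 i)) * (Matrix.of fun i j => f j (X.1 i)).det *
        (Matrix.of fun i j => ω (X.1 i) (X.2 j)).det *
        (Matrix.of fun i j => g j (X.2 i)).det
      = ∑ σ : Equiv.Perm (Fin N), ∑ τ : Equiv.Perm (Fin N),
          Bfun wL wR ω f g (X.1 ∘ σ, X.2 ∘ τ) := by
    intro X
    rw [← det_expand wL wR ω f g X.1 X.2, Matrix.det_mul_column (fun i => wL (X.1 i)) (fun i j => f j (X.1 i)),
      Matrix.det_mul_column (fun i => wR (X.2 i)) (fun i j => g j (X.2 i)),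
      Finset.prod_mul_distrib,
      show (Matrix.det (fun i j : Fin N => f j (X.1 i)) : ℂ)
        = (Matrix.of fun i j : Fin N => f j (X.1 i)).det from rfl,
      show (Matrix.det (fun i j : Fin N => g j (X.2 i)) : ℂ)
        = (Matrix.of fun i j : Fin N => g j (X.2 i)).det from rfl]
    ring
  calc ∫ X : (Fin N → ℝ) × (Fin N → ℝ),
      (∏ i, wL (X.1 i) * wR (X.2 i)) * (Matrix.of fun i j => f j (X.1 i)).det *
        (Matrix.of fun i j => ω (X.1 i) (X.2 j)).det *
        (Matrix.of fun i j => g j (X.2 i)).det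
      = ∫ X : (Fin N → ℝ) × (Fin N → ℝ), ∑ σ : Equiv.Perm (Fin N), ∑ τ : Equiv.Perm (Fin N),
          Bfun wL wR ω f g (X.1 ∘ σ, X.2 ∘ τ) := by simp_rw [hpt]
    _ = ∑ σ : Equiv.Perm (Fin N), ∑ τ : Equiv.Perm (Fin N),
          ∫ X : (Fin N → ℝ) × (Fin N → ℝ), Bfun wL wR ω f g (X.1 ∘ σ, X.2 ∘ τ) := by
        rw [integral_finset_sum _ fun σ _ => integrable_finset_sum _ fun τ _ =>
          integrable_comp_perm σ τ hBint]
        exact Finset.sum_congr rfl fun σ _ => integral_finset_sum _ fun τ _ =>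
          integrable_comp_perm σ τ hBint
    _ = ∑ _σ : Equiv.Perm (Fin N), ∑ _τ : Equiv.Perm (Fin N),
          ∫ X : (Fin N → ℝ) × (Fin N → ℝ), Bfun wL wR ω f g X :=
        Finset.sum_congr rfl fun σ _ => Finset.sum_congr rfl fun τ _ =>
          integral_comp_perm σ τ _
    _ = ((N.factorial : ℂ)) ^ 2 * ∫ X : (Fin N → ℝ) × (Fin N → ℝ), Bfun wL wR ω f g X := by
        simp only [Finset.sum_const, Finset.card_univ, Fintype.card_perm, Fintype.card_fin,
          nsmul_eq_mul]
        ring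
    _ = ((N.factorial : ℂ)) ^ 2 * (Matrix.of fun i j => pairing wL wR ω (f i) (g j)).det := by
        rw [B_integral wL wR ω f g hpair]

end SchurAux

/-- **Schur polynomial average in bialternant form.** For partitions `λ, μ` with at most
`N` parts, assuming absolute convergence of all integrals,
`(1/N!²) ∫ (∏ w_L w_R) det(x_{L,i}^{λ_j+N−j}) det ω(x_{L,i},x_{R,j}) det(x_{R,i}^{μ_j+N−j})
= det( ⟨x^{λ_i+N−i}|ω|x^{μ_j+N−j}⟩ )`. -/
theorem schur_polynomial_average (N : ℕ) (hN : 1 ≤ N)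
    (wL wR : ℝ → ℂ) (ω : ℝ → ℝ → ℂ)
    (hwL : Measurable wL) (hwR : Measurable wR) (hω : Measurable (Function.uncurry ω))
    (lam mu : Fin N → ℕ) (hlam : Antitone lam) (hmu : Antitone mu)
    (hint : Integrable (fun X : (Fin N → ℝ) × (Fin N → ℝ) =>
      (∏ i, wL (X.1 i) * wR (X.2 i)) *
        (Matrix.of fun i j : Fin N => (X.1 i : ℂ) ^ (lam j + (N - 1 - (j : ℕ)))).det *
        (Matrix.of fun i j => ω (X.1 i) (X.2 j)).det *
        (Matrix.of fun i j : Fin N => (X.2 i : ℂ) ^ (mu j + (N - 1 - (j : ℕ)))).det))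
    (hpair : ∀ i j : Fin N, Integrable (pairingIntegrand wL wR ω
      (fun x => (x : ℂ) ^ (lam i + (N - 1 - (i : ℕ))))
      (fun y => (y : ℂ) ^ (mu j + (N - 1 - (j : ℕ)))))) :
    ((N.factorial : ℂ) ^ 2)⁻¹ * ∫ X : (Fin N → ℝ) × (Fin N → ℝ),
        (∏ i, wL (X.1 i) * wR (X.2 i)) *
          (Matrix.of fun i j : Fin N => (X.1 i : ℂ) ^ (lam j + (N - 1 - (j : ℕ)))).det *
          (Matrix.of fun i j => ω (X.1 i) (X.2 j)).det *
          (Matrix.of fun i j : Fin N => (X.2 i : ℂ) ^ (mu j + (N - 1 - (j : ℕ)))).det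
      = (Matrix.of fun i j : Fin N =>
          pairing wL wR ω (fun x => (x : ℂ) ^ (lam i + (N - 1 - (i : ℕ))))
            (fun y => (y : ℂ) ^ (mu j + (N - 1 - (j : ℕ))))).det := by
  have h := SchurAux.main_general wL wR ω
    (fun i x => (x : ℂ) ^ (lam i + (N - 1 - (i : ℕ))))
    (fun j y => (y : ℂ) ^ (mu j + (N - 1 - (j : ℕ)))) hpair
  beta_reduce at h
  rw [h, ← mul_assoc, inv_mul_cancel₀ (pow_ne_zero _ (Nat.cast_ne_zero.mpr
    (Nat.factorial_ne_zero N))), one_mul]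
end

section
/- Characteristic polynomial average: Let M ≥ 1 and let P_0,…,P_{N+M−1} and Q_0,…,Q_{N+M−1} be biorthogonal monic polynomials with normalization constants h_0,…,h_{N+M−1}, with h_i ≠ 0 for 0 ≤ i ≤ N−1, and assume all integrals involved are absolutely convergent. Then for pairwise distinct z_1,…,z_M ∈ ℂ: I_N[ ∏_{α=1}^M ∏_{i=1}^N (z_α − x_{L,i}) ] = ( ∏_{i=0}^{N−1} h_i / Δ_M(Z) ) · det_{1≤α,β≤M}( P_{N+M−β}(z_α) ), where Δ_M(Z) = ∏_{α<β}(z_α − z_β). -/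
open MeasureTheory Matrix Finset

set_option maxRecDepth 10000

open Equiv

noncomputable section CPAHelpers

lemma prod_Ioi_eq_ite {k : ℕ} (i : Fin k) (g : Fin k → ℂ) :
    ∏ j ∈ Ioi i, g j = ∏ j, if i < j then g j else 1 := by
  rw [← Finset.prod_filter]
  congr 1
  ext j; simp

lemma prod_pairs_append {n m : ℕ} (f : Fin (n+m) → Fin (n+m) → ℂ) :
    ∏ i, ∏ j ∈ Ioi i, f i j =
      ((∏ i : Fin n, ∏ j ∈ Ioi i, f (Fin.castAdd m i) (Fin.castAdd m j)) *
       (∏ a : Fin m, ∏ b ∈ Ioi a, f (Fin.natAdd n a) (Fin.natAdd n b))) *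
      ∏ i : Fin n, ∏ a : Fin m, f (Fin.castAdd m i) (Fin.natAdd n a) := by
  simp only [prod_Ioi_eq_ite]
  rw [Fin.prod_univ_add]
  simp only [Fin.prod_univ_add]
  have c1 : ∀ (i j : Fin n), (Fin.castAdd m i < Fin.castAdd m j) = (i < j) := by
    intro i j; simp only [Fin.lt_def, Fin.coe_castAdd, eq_iff_iff]
  have c2 : ∀ (i : Fin n) (a : Fin m), (Fin.castAdd m i < Fin.natAdd n a) = True := by
    intro i j; simp only [Fin.lt_def, Fin.coe_castAdd, Fin.coe_natAdd, eq_iff_iff, iff_true]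
    omega
  have c3 : ∀ (a : Fin m) (j : Fin n), (Fin.natAdd n a < Fin.castAdd m j) = False := by
    intro a j; simp only [Fin.lt_def, Fin.coe_castAdd, Fin.coe_natAdd, eq_iff_iff, iff_false, not_lt]
    omega
  have c4 : ∀ (a b : Fin m), (Fin.natAdd n a < Fin.natAdd n b) = (a < b) := by
    intro a b; simp only [Fin.lt_def, Fin.coe_natAdd, eq_iff_iff]
    omega
  simp only [c1, c2, c3, c4, if_true, if_false, ite_true, ite_false, prod_const_one, mul_one]
  rw [prod_mul_distrib]
  ring


lemma card_Ioi_sum (k : ℕ) : ∑ i : Fin k, (Ioi i).card = k.choose 2 := by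
  simp only [Fin.card_Ioi]
  rw [Fin.sum_univ_eq_sum_range (fun i => k - 1 - i), ← Finset.sum_range_reflect]
  rw [Nat.choose_two_right, ← Finset.sum_range_id]
  apply Finset.sum_congr rfl
  intro i hi; simp only [Finset.mem_range] at hi; omega

lemma delta_flip {k : ℕ} (v : Fin k → ℂ) :
    ∏ i, ∏ j ∈ Ioi i, (v i - v j) = (-1 : ℂ)^(k.choose 2) * (Matrix.vandermonde v).det := by
  rw [Matrix.det_vandermonde]
  have : ∀ i : Fin k, ∀ j ∈ Ioi i, v i - v j = (-1) * (v j - v i) := by intros; ring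
  rw [Finset.prod_congr rfl (fun i _ => Finset.prod_congr rfl (this i))]
  simp only [Finset.prod_mul_distrib, Finset.prod_const]
  rw [Finset.prod_pow_eq_pow_sum, card_Ioi_sum]

lemma choose_two_add (n m : ℕ) : (n + m).choose 2 = n.choose 2 + m.choose 2 + n * m := by
  induction m with
  | zero => simp
  | succ k ih =>
    have h1 : (n + (k+1)).choose 2 = (n + k).choose 2 + (n + k) := by
      rw [← Nat.add_assoc, Nat.choose_succ_succ]
      simp [Nat.choose_one_right]; ring
    have h2 : (k+1).choose 2 = k.choose 2 + k := by
      rw [Nat.choose_succ_succ]; simp [Nat.choose_one_right]; ring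
    rw [h1, ih, h2]; ring

lemma revPerm_decompose (n : ℕ) :
    (Fin.revPerm : Perm (Fin (n+1))) =
      Equiv.Perm.decomposeFin.symm (Fin.last n, Fin.revPerm * finRotate n) := by
  apply Equiv.ext
  intro x
  refine Fin.cases ?_ ?_ x
  · rw [Equiv.Perm.decomposeFin_symm_apply_zero]
    ext; simp [Fin.val_rev, Fin.last]
  · intro y
    rw [Equiv.Perm.decomposeFin_symm_apply_succ]
    have hy := y.isLt
    rcases Nat.lt_or_ge ((y : ℕ) + 1) n with hc | hc
    · have h1 : (finRotate n) y = ⟨(y:ℕ)+1, hc⟩ := by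
        cases n with
        | zero => exact absurd hy (Nat.not_lt_zero _)
        | succ m =>
          rw [finRotate_succ_apply]
          ext; rw [Fin.val_add_one]
          split
          · next h => exact absurd (congrArg Fin.val h) (by simp [Fin.last]; omega)
          · rfl
      rw [Equiv.Perm.mul_apply, h1]
      rw [Equiv.swap_apply_of_ne_of_ne]
      · ext; simp [Fin.val_rev]; omega
      · intro hcon
        have := congrArg Fin.val hcon
        simp [Fin.val_rev] at this
      · intro hcon
        have := congrArg Fin.val hcon
        simp [Fin.val_rev, Fin.last] at this; omega
    · -- y + 1 = n, i.e. y is last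
      have hn : (y : ℕ) = n - 1 ∧ 1 ≤ n := by omega
      have h1 : (finRotate n) y = ⟨0, by omega⟩ := by
        cases n with
        | zero => exact absurd hy (Nat.not_lt_zero _)
        | succ m =>
          rw [finRotate_succ_apply]
          ext; rw [Fin.val_add_one]
          split
          · rfl
          · next h => exact absurd (Fin.ext (by simp [Fin.last]; omega)) h
      rw [Equiv.Perm.mul_apply, h1]
      have h2 : (Fin.revPerm ⟨0, by omega⟩ : Fin n) = ⟨n - 1, by omega⟩ := by
        ext; simp [Fin.val_rev]
      rw [h2]
      have h3 : Fin.succ (⟨n-1, by omega⟩ : Fin n) = Fin.last n := by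
        ext; simp [Fin.last]; omega
      rw [h3, Equiv.swap_apply_right]
      ext; simp [Fin.val_rev]; omega

lemma sign_revPerm (n : ℕ) :
    Equiv.Perm.sign (Fin.revPerm : Perm (Fin n)) = (-1)^(n.choose 2) := by
  induction n with
  | zero =>
    have : (Fin.revPerm : Perm (Fin 0)) = 1 := Subsingleton.elim _ _
    simp [this]
  | succ m ih =>
    rw [revPerm_decompose, Equiv.Perm.decomposeFin.symm_sign, _root_.map_mul, ih]
    cases m with
    | zero =>
      have : (finRotate 0) = 1 := Subsingleton.elim _ _
      simp [this]
    | succ k =>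
      rw [sign_finRotate]
      have hlast : (Fin.last (k+1)) ≠ 0 := by
        intro hcon; have := congrArg Fin.val hcon; simp [Fin.last] at this
      rw [if_neg hlast]
      have h2 : (k+2).choose 2 = (k+1).choose 2 + (k+1) := by
        rw [Nat.choose_succ_succ]; simp [Nat.choose_one_right]; ring
      rw [h2, pow_add, pow_add, pow_one]
      simp [mul_comm, mul_left_comm]


section
variable {N : ℕ}

noncomputable def permEquiv (N : ℕ) (π : Equiv.Perm (Fin N)) :
    (Fin N → ℝ × ℝ) ≃ᵐ ((Fin N → ℝ) × (Fin N → ℝ)) :=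
  (MeasurableEquiv.arrowProdEquivProdArrow ℝ ℝ (Fin N)).trans
    ((MeasurableEquiv.refl (Fin N → ℝ)).prodCongr
      (MeasurableEquiv.piCongrLeft (fun _ : Fin N => ℝ) π))

lemma permEquiv_mp (π : Equiv.Perm (Fin N)) :
    MeasurePreserving (permEquiv N π) volume volume := by
  have h1 := volume_measurePreserving_arrowProdEquivProdArrow ℝ ℝ (Fin N)
  have h2 : MeasurePreserving
      (Prod.map (id : (Fin N → ℝ) → (Fin N → ℝ))
        (⇑(MeasurableEquiv.piCongrLeft (fun _ : Fin N => ℝ) π))) volume volume :=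
    (MeasurePreserving.id volume).prod
      (volume_measurePreserving_piCongrLeft (fun _ : Fin N => ℝ) π)
  have heq : ⇑(permEquiv N π) =
      (Prod.map (id : (Fin N → ℝ) → (Fin N → ℝ))
        (⇑(MeasurableEquiv.piCongrLeft (fun _ : Fin N => ℝ) π))) ∘
      ⇑(MeasurableEquiv.arrowProdEquivProdArrow ℝ ℝ (Fin N)) := rfl
  rw [heq]
  exact h2.comp h1

lemma permEquiv_apply (π : Equiv.Perm (Fin N)) (u : Fin N → ℝ × ℝ) (i : Fin N) :
    (permEquiv N π u).1 i = (u i).1 ∧ (permEquiv N π u).2 (π i) = (u i).2 := by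
  constructor
  · rfl
  · show (MeasurableEquiv.piCongrLeft (fun _ : Fin N => ℝ) π) (fun j => (u j).2) (π i) = (u i).2
    simp [MeasurableEquiv.coe_piCongrLeft, Equiv.piCongrLeft_apply_apply]

lemma integrable_prod_perm (F : Fin N → ℝ × ℝ → ℂ) (hF : ∀ i, Integrable (F i))
    (π : Equiv.Perm (Fin N)) :
    Integrable (fun XY : (Fin N → ℝ) × (Fin N → ℝ) => ∏ i, F i (XY.1 i, XY.2 (π i))) := by
  rw [← (permEquiv_mp π).integrable_comp_emb (permEquiv N π).measurableEmbedding]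
  have : ((fun XY : (Fin N → ℝ) × (Fin N → ℝ) => ∏ i, F i (XY.1 i, XY.2 (π i))) ∘ (permEquiv N π))
      = fun u : Fin N → ℝ × ℝ => ∏ i, F i (u i) := by
    funext u
    simp only [Function.comp_apply]
    refine Finset.prod_congr rfl fun i _ => ?_
    rw [(permEquiv_apply π u i).1, (permEquiv_apply π u i).2]
  rw [this]
  exact Integrable.fintype_prod hF

lemma integral_prod_perm (F : Fin N → ℝ × ℝ → ℂ) (π : Equiv.Perm (Fin N)) :
    ∫ XY : (Fin N → ℝ) × (Fin N → ℝ), ∏ i, F i (XY.1 i, XY.2 (π i)) = ∏ i, ∫ s, F i s := by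
  rw [← (permEquiv_mp π).integral_comp']
  have : ∀ u : Fin N → ℝ × ℝ,
      (∏ i, F i ((permEquiv N π u).1 i, (permEquiv N π u).2 (π i))) = ∏ i, F i (u i) := by
    intro u
    refine Finset.prod_congr rfl fun i _ => ?_
    rw [(permEquiv_apply π u i).1, (permEquiv_apply π u i).2]
  simp_rw [this]
  exact MeasureTheory.integral_fintype_prod_eq_prod F
end


lemma per_term {N M : ℕ} (wL wR : ℝ → ℂ) (ω : ℝ → ℝ → ℂ) (P Q : ℕ → Polynomial ℂ)
    (z : Fin M → ℂ) (X Y : Fin N → ℝ) (σ : Perm (Fin (N+M))) (τ ρ : Perm (Fin N)) :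
    (∏ j : Fin (N+M), (P (j:ℕ)).eval (Fin.append (fun i => ((X i : ℝ) : ℂ)) z (σ j))) *
    (∏ i, wL (X i) * wR (Y i)) *
    (∏ j : Fin N, ω (X (τ j)) (Y j)) *
    (∏ j : Fin N, (Q (j:ℕ)).eval ((Y (ρ j) : ℂ))) =
    (∏ α : Fin M, (P ((σ.symm (Fin.natAdd N α) : Fin (N+M)) : ℕ)).eval (z α)) *
    ∏ i : Fin N, pairingIntegrand wL wR ω
      (fun x => (P ((σ.symm (Fin.castAdd M i) : Fin (N+M)) : ℕ)).eval (x:ℂ))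
      (fun y => (Q (((τ * ρ).symm i : Fin N) : ℕ)).eval (y:ℂ)) (X i, Y (τ.symm i)) := by
  have l1 : (∏ j : Fin (N+M), (P (j:ℕ)).eval (Fin.append (fun i => ((X i : ℝ) : ℂ)) z (σ j)))
      = (∏ i : Fin N, (P ((σ.symm (Fin.castAdd M i) : Fin (N+M)) : ℕ)).eval ((X i : ℂ))) *
        (∏ α : Fin M, (P ((σ.symm (Fin.natAdd N α) : Fin (N+M)) : ℕ)).eval (z α)) := by
    have e1 := Equiv.prod_comp σ (fun k : Fin (N+M) =>
      (P ((σ.symm k : Fin (N+M)) : ℕ)).eval (Fin.append (fun i => ((X i : ℝ) : ℂ)) z k))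
    simp only [Equiv.symm_apply_apply] at e1
    rw [e1, Fin.prod_univ_add]
    congr 1
    · exact Finset.prod_congr rfl fun i _ => by rw [Fin.append_left]
    · exact Finset.prod_congr rfl fun α _ => by rw [Fin.append_right]
  have l2 : (∏ i, wL (X i) * wR (Y i))
      = (∏ i, wL (X i)) * ∏ i, wR (Y (τ.symm i)) := by
    rw [Finset.prod_mul_distrib, Equiv.prod_comp τ.symm (fun i => wR (Y i))]
  have l3 : (∏ j : Fin N, ω (X (τ j)) (Y j)) = ∏ i, ω (X i) (Y (τ.symm i)) := by
    have e3 := Equiv.prod_comp τ (fun i => ω (X i) (Y (τ.symm i)))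
    simp only [Equiv.symm_apply_apply] at e3
    rw [← e3]
  have l4 : (∏ j : Fin N, (Q (j:ℕ)).eval ((Y (ρ j) : ℂ)))
      = ∏ i, (Q (((τ * ρ).symm i : Fin N) : ℕ)).eval ((Y (τ.symm i) : ℂ)) := by
    have e4 := Equiv.prod_comp ρ (fun k : Fin N => (Q ((ρ.symm k : Fin N) : ℕ)).eval ((Y k : ℂ)))
    simp only [Equiv.symm_apply_apply] at e4
    rw [e4]
    have e5 := Equiv.prod_comp τ.symm
      (fun k : Fin N => (Q ((ρ.symm k : Fin N) : ℕ)).eval ((Y k : ℂ)))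
    rw [← e5]
    refine Finset.prod_congr rfl fun i _ => ?_
    have : (τ * ρ).symm i = ρ.symm (τ.symm i) := rfl
    rw [this]
  rw [l1, l2, l3, l4]
  simp only [pairingIntegrand, Finset.prod_mul_distrib]
  ring


variable {N M : ℕ}

def Phi (μ : Perm (Fin N)) (q : Perm (Fin M)) : Perm (Fin (N+M)) :=
  Equiv.permCongr finSumFinEquiv (Equiv.sumCongr μ q)

lemma Phi_castAdd (μ : Perm (Fin N)) (q : Perm (Fin M)) (i : Fin N) :
    Phi μ q (Fin.castAdd M i) = Fin.castAdd M (μ i) := by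
  simp [Phi, Equiv.permCongr_apply]

lemma Phi_natAdd (μ : Perm (Fin N)) (q : Perm (Fin M)) (α : Fin M) :
    Phi μ q (Fin.natAdd N α) = Fin.natAdd N (q α) := by
  simp [Phi, Equiv.permCongr_apply]

lemma Phi_symm_castAdd (μ : Perm (Fin N)) (q : Perm (Fin M)) (i : Fin N) :
    (Phi μ q).symm (Fin.castAdd M i) = Fin.castAdd M (μ.symm i) := by
  rw [Equiv.symm_apply_eq, Phi_castAdd, Equiv.apply_symm_apply]

lemma Phi_symm_natAdd (μ : Perm (Fin N)) (q : Perm (Fin M)) (α : Fin M) :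
    (Phi μ q).symm (Fin.natAdd N α) = Fin.natAdd N (q.symm α) := by
  rw [Equiv.symm_apply_eq, Phi_natAdd, Equiv.apply_symm_apply]

lemma sign_Phi (μ : Perm (Fin N)) (q : Perm (Fin M)) :
    Equiv.Perm.sign (Phi μ q) = Equiv.Perm.sign μ * Equiv.Perm.sign q := by
  rw [Phi, Equiv.Perm.sign_permCongr, Equiv.Perm.sign_sumCongr]

lemma Phi_injective (μ : Perm (Fin N)) : Function.Injective (Phi (M := M) μ) := by
  intro q q' hqq
  apply Equiv.ext
  intro α
  have h0 := congrArg (fun σ : Perm (Fin (N+M)) => σ (Fin.natAdd N α)) hqq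
  simp only [Phi_natAdd] at h0
  have hv := congrArg Fin.val h0
  simp only [Fin.coe_natAdd] at hv
  exact Fin.ext (by omega)

lemma Phi_mem (μ : Perm (Fin N)) (σ : Perm (Fin (N+M)))
    (hc : ∀ i, σ.symm (Fin.castAdd M i) = Fin.castAdd M (μ.symm i)) :
    ∃ q : Perm (Fin M), σ = Phi μ q := by
  have hc' : ∀ j, σ (Fin.castAdd M j) = Fin.castAdd M (μ j) := by
    intro j
    have h0 := hc (μ j)
    rw [Equiv.symm_apply_apply] at h0
    rw [← h0, Equiv.apply_symm_apply]
  have hge : ∀ α : Fin M, N ≤ (σ (Fin.natAdd N α) : ℕ) := by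
    intro α
    by_contra hlt
    push_neg at hlt
    have h1 : σ (Fin.natAdd N α) = Fin.castAdd M ⟨(σ (Fin.natAdd N α) : ℕ), hlt⟩ := by
      ext; simp
    have h2 := hc' (μ.symm ⟨(σ (Fin.natAdd N α) : ℕ), hlt⟩)
    rw [Equiv.apply_symm_apply] at h2
    have := σ.injective (h1.trans h2.symm)
    have hv := congrArg Fin.val this
    simp [Fin.coe_natAdd, Fin.coe_castAdd] at hv
    omega
  have hge' : ∀ α : Fin M, N ≤ (σ.symm (Fin.natAdd N α) : ℕ) := by
    intro α
    by_contra hlt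
    push_neg at hlt
    have h1 : σ.symm (Fin.natAdd N α) = Fin.castAdd M ⟨(σ.symm (Fin.natAdd N α) : ℕ), hlt⟩ := by
      ext; simp
    have h2 := hc' ⟨(σ.symm (Fin.natAdd N α) : ℕ), hlt⟩
    rw [← h1, Equiv.apply_symm_apply] at h2
    have hv := congrArg Fin.val h2
    simp [Fin.coe_natAdd, Fin.coe_castAdd] at hv
    omega
  refine ⟨⟨fun α => ⟨(σ (Fin.natAdd N α) : ℕ) - N, by have := (σ (Fin.natAdd N α)).isLt; have := hge α; omega⟩,
           fun α => ⟨(σ.symm (Fin.natAdd N α) : ℕ) - N, by have := (σ.symm (Fin.natAdd N α)).isLt; have := hge' α; omega⟩,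
           ?_, ?_⟩, ?_⟩
  · intro α
    have hv : Fin.natAdd N (⟨(σ (Fin.natAdd N α) : ℕ) - N, by have := (σ (Fin.natAdd N α)).isLt; have := hge α; omega⟩ : Fin M) = σ (Fin.natAdd N α) := by
      ext; simp [Fin.coe_natAdd]; have := hge α; omega
    ext
    simp only [hv, Equiv.symm_apply_apply, Fin.coe_natAdd]
    omega
  · intro α
    have hv : Fin.natAdd N (⟨(σ.symm (Fin.natAdd N α) : ℕ) - N, by have := (σ.symm (Fin.natAdd N α)).isLt; have := hge' α; omega⟩ : Fin M) = σ.symm (Fin.natAdd N α) := by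
      ext; simp [Fin.coe_natAdd]; have := hge' α; omega
    ext
    simp only [hv, Equiv.apply_symm_apply, Fin.coe_natAdd]
    omega
  · apply Equiv.ext
    intro k
    induction k using Fin.addCases with
    | left i => rw [hc' i, Phi_castAdd]
    | right α =>
      rw [Phi_natAdd]
      ext
      simp only [Fin.coe_natAdd, Equiv.coe_fn_mk]
      have := hge α
      omega

end CPAHelpers

noncomputable section CPAMain

variable {N M : ℕ}

/-- sign as a complex number -/
def es {α : Type*} [DecidableEq α] [Fintype α] (p : Equiv.Perm α) : ℂ :=
  ((Equiv.Perm.sign p : ℤ) : ℂ)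

lemma es_mul {α : Type*} [DecidableEq α] [Fintype α] (p q : Equiv.Perm α) :
    es (p * q) = es p * es q := by
  simp [es]

lemma es_inv {α : Type*} [DecidableEq α] [Fintype α] (p : Equiv.Perm α) :
    es p⁻¹ = es p := by
  simp [es]

lemma es_sq {α : Type*} [DecidableEq α] [Fintype α] (p : Equiv.Perm α) :
    es p * es p = 1 := by
  simp only [es]
  rw [← Int.cast_mul, ← Units.val_mul]
  norm_cast
  rw [Int.units_mul_self]
  rfl

lemma main1 (wL wR : ℝ → ℂ) (ω : ℝ → ℝ → ℂ)
    (P Q : ℕ → Polynomial ℂ)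
    (hP : ∀ k < N + M, (P k).Monic ∧ (P k).natDegree = k)
    (hQ : ∀ k < N + M, (Q k).Monic ∧ (Q k).natDegree = k)
    (z : Fin M → ℂ) (hz : Function.Injective z)
    (XY : (Fin N → ℝ) × (Fin N → ℝ)) :
    cmmIntegrand N wL wR ω (fun XL _ => ∏ α : Fin M, ∏ i : Fin N, (z α - (XL i : ℂ))) XY
    = ((DeltaC z)⁻¹ * (-1:ℂ)^(N*M) * (-1:ℂ)^((N+M).choose 2) * (-1:ℂ)^(N.choose 2)) *
      ∑ σ : Equiv.Perm (Fin (N+M)), ∑ τ : Equiv.Perm (Fin N), ∑ ρ : Equiv.Perm (Fin N),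
        ((es σ * es τ * es ρ) *
          (∏ α : Fin M, (P ((σ.symm (Fin.natAdd N α) : Fin (N+M)) : ℕ)).eval (z α))) *
        ∏ i : Fin N, pairingIntegrand wL wR ω
          (fun x => (P ((σ.symm (Fin.castAdd M i) : Fin (N+M)) : ℕ)).eval (x:ℂ))
          (fun y => (Q (((τ * ρ).symm i : Fin N) : ℕ)).eval (y:ℂ))
          (XY.1 i, XY.2 (τ.symm i)) := by
  obtain ⟨X, Y⟩ := XY
  have hzne : DeltaC z ≠ 0 := by
    rw [DeltaC]
    rw [Finset.prod_ne_zero_iff]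
    intro i _
    rw [Finset.prod_ne_zero_iff]
    intro j hj
    rw [Finset.mem_Ioi] at hj
    exact sub_ne_zero.mpr fun hc => absurd (hz hc) (ne_of_lt hj)
  -- split of the appended Vandermonde product
  have hsplit : DeltaC (Fin.append (fun i => ((X i : ℝ) : ℂ)) z)
      = (Delta X * DeltaC z) * ∏ i : Fin N, ∏ α : Fin M, (((X i : ℝ) : ℂ) - z α) := by
    rw [DeltaC]
    rw [prod_pairs_append (fun i j => Fin.append (fun i => ((X i : ℝ) : ℂ)) z i
        - Fin.append (fun i => ((X i : ℝ) : ℂ)) z j)]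
    simp only [Fin.append_left, Fin.append_right]
    rw [Delta, DeltaC]
  -- flip of the observable
  have hobs : (∏ α : Fin M, ∏ i : Fin N, (z α - ((X i : ℝ) : ℂ)))
      = (-1:ℂ)^(N*M) * ∏ i : Fin N, ∏ α : Fin M, (((X i : ℝ) : ℂ) - z α) := by
    rw [Finset.prod_comm]
    have h1 : ∀ i : Fin N, (∏ α : Fin M, (z α - ((X i : ℝ) : ℂ)))
        = (-1:ℂ)^M * ∏ α : Fin M, (((X i : ℝ) : ℂ) - z α) := by
      intro i
      calc (∏ α : Fin M, (z α - ((X i : ℝ) : ℂ)))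
          = ∏ α : Fin M, ((-1) * (((X i : ℝ) : ℂ) - z α)) :=
            Finset.prod_congr rfl (fun α _ => by ring)
        _ = (-1:ℂ)^M * ∏ α : Fin M, (((X i : ℝ) : ℂ) - z α) := by
            rw [Finset.prod_mul_distrib, Finset.prod_const, Finset.card_univ, Fintype.card_fin]
    calc (∏ i : Fin N, ∏ α : Fin M, (z α - ((X i : ℝ) : ℂ)))
        = ∏ i : Fin N, ((-1:ℂ)^M * ∏ α : Fin M, (((X i : ℝ) : ℂ) - z α)) :=
          Finset.prod_congr rfl (fun i _ => h1 i)
      _ = ((-1:ℂ)^M)^N * ∏ i : Fin N, ∏ α : Fin M, (((X i : ℝ) : ℂ) - z α) := by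
          rw [Finset.prod_mul_distrib, Finset.prod_const, Finset.card_univ, Fintype.card_fin]
      _ = (-1:ℂ)^(N*M) * ∏ i : Fin N, ∏ α : Fin M, (((X i : ℝ) : ℂ) - z α) := by
          rw [← pow_mul, Nat.mul_comm]
  have hvdm : DeltaC (Fin.append (fun i => ((X i : ℝ) : ℂ)) z)
      = (-1:ℂ)^((N+M).choose 2) *
        (Matrix.of fun i j : Fin (N+M) =>
          (P (j:ℕ)).eval (Fin.append (fun i' => ((X i' : ℝ) : ℂ)) z i)).det := by
    rw [DeltaC, delta_flip,
      Matrix.det_eval_matrixOfPolynomials_eq_det_vandermonde _ (fun j : Fin (N+M) => P (j:ℕ))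
        (fun j => (hP j j.isLt).2) (fun j => (hP j j.isLt).1)]
  have hdy : Delta Y = (-1:ℂ)^(N.choose 2) *
      (Matrix.of fun i j : Fin N => (Q (j:ℕ)).eval ((Y i : ℂ))).det := by
    rw [Delta, delta_flip,
      Matrix.det_eval_matrixOfPolynomials_eq_det_vandermonde _ (fun j : Fin N => Q (j:ℕ))
        (fun j => (hQ j (Nat.lt_of_lt_of_le j.isLt (Nat.le_add_right N M))).2)
        (fun j => (hQ j (Nat.lt_of_lt_of_le j.isLt (Nat.le_add_right N M))).1)]
  have key1 : (∏ α : Fin M, ∏ i : Fin N, (z α - ((X i : ℝ) : ℂ))) * Delta X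
      = (-1:ℂ)^(N*M) * (DeltaC z)⁻¹ * ((-1:ℂ)^((N+M).choose 2) *
        (Matrix.of fun i j : Fin (N+M) =>
          (P (j:ℕ)).eval (Fin.append (fun i' => ((X i' : ℝ) : ℂ)) z i)).det) := by
    rw [← hvdm, hobs, hsplit]
    field_simp
  show (∏ α : Fin M, ∏ i : Fin N, (z α - ((X i : ℝ) : ℂ))) *
      (∏ i, wL (X i) * wR (Y i)) * Delta X *
      (Matrix.of fun i j => ω (X i) (Y j)).det * Delta Y = _
  calc (∏ α : Fin M, ∏ i : Fin N, (z α - ((X i : ℝ) : ℂ))) *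
        (∏ i, wL (X i) * wR (Y i)) * Delta X *
        (Matrix.of fun i j => ω (X i) (Y j)).det * Delta Y
      = ((∏ α : Fin M, ∏ i : Fin N, (z α - ((X i : ℝ) : ℂ))) * Delta X) *
        (∏ i, wL (X i) * wR (Y i)) *
        (Matrix.of fun i j => ω (X i) (Y j)).det * Delta Y := by ring
    _ = ((DeltaC z)⁻¹ * (-1:ℂ)^(N*M) * (-1:ℂ)^((N+M).choose 2) * (-1:ℂ)^(N.choose 2)) *
        ((Matrix.of fun i j : Fin (N+M) =>
            (P (j:ℕ)).eval (Fin.append (fun i' => ((X i' : ℝ) : ℂ)) z i)).det *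
         (∏ i, wL (X i) * wR (Y i)) *
         (Matrix.of fun i j => ω (X i) (Y j)).det *
         (Matrix.of fun i j : Fin N => (Q (j:ℕ)).eval ((Y i : ℂ))).det) := by
        rw [key1, hdy]; ring
    _ = _ := by
        congr 1
        rw [Matrix.det_apply' (Matrix.of fun i j : Fin (N+M) =>
            (P (j:ℕ)).eval (Fin.append (fun i' => ((X i' : ℝ) : ℂ)) z i)),
          Matrix.det_apply' (Matrix.of fun i j => ω (X i) (Y j)),
          Matrix.det_apply' (Matrix.of fun i j : Fin N => (Q (j:ℕ)).eval ((Y i : ℂ)))]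
        simp only [Finset.sum_mul, Finset.mul_sum]
        conv_rhs => rw [Finset.sum_comm]
        conv_rhs => enter [2, τ]; rw [Finset.sum_comm]
        conv_rhs => rw [Finset.sum_comm]
        refine Finset.sum_congr rfl fun ρ _ => ?_
        refine Finset.sum_congr rfl fun τ _ => ?_
        refine Finset.sum_congr rfl fun σ _ => ?_
        simp only [Matrix.of_apply, es]
        have hpt := per_term wL wR ω P Q z X Y σ τ ρ
        calc (((Equiv.Perm.sign σ : ℤ) : ℂ) * ∏ j : Fin (N+M),
                (P ((j : Fin (N+M)):ℕ)).eval (Fin.append (fun i' => ((X i' : ℝ) : ℂ)) z (σ j))) *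
              (∏ i, wL (X i) * wR (Y i)) *
              (((Equiv.Perm.sign τ : ℤ) : ℂ) * ∏ j : Fin N, ω (X (τ j)) (Y j)) *
              (((Equiv.Perm.sign ρ : ℤ) : ℂ) * ∏ j : Fin N, (Q ((j : Fin N):ℕ)).eval ((Y (ρ j) : ℂ)))
            = (((Equiv.Perm.sign σ : ℤ) : ℂ) * ((Equiv.Perm.sign τ : ℤ) : ℂ) *
               ((Equiv.Perm.sign ρ : ℤ) : ℂ)) *
              ((∏ j : Fin (N+M),
                  (P ((j : Fin (N+M)):ℕ)).eval (Fin.append (fun i' => ((X i' : ℝ) : ℂ)) z (σ j))) *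
               (∏ i, wL (X i) * wR (Y i)) *
               (∏ j : Fin N, ω (X (τ j)) (Y j)) *
               (∏ j : Fin N, (Q ((j : Fin N):ℕ)).eval ((Y (ρ j) : ℂ)))) := by ring
          _ = _ := by rw [hpt]; ring

lemma es_Phi (μ : Equiv.Perm (Fin N)) (q : Equiv.Perm (Fin M)) :
    es (Phi μ q) = es μ * es q := by
  simp [es, sign_Phi, Units.val_mul]

lemma hD_det (P : ℕ → Polynomial ℂ) (z : Fin M → ℂ) :
    (∑ q : Equiv.Perm (Fin M), es q *
        ∏ α : Fin M, (P (N + ((q.symm α : Fin M) : ℕ))).eval (z α))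
    = (-1:ℂ)^(M.choose 2) *
        (Matrix.of fun α β : Fin M => (P (N + M - 1 - (β:ℕ))).eval (z α)).det := by
  have h1 : (∑ q : Equiv.Perm (Fin M), es q *
        ∏ α : Fin M, (P (N + ((q.symm α : Fin M) : ℕ))).eval (z α))
      = (Matrix.of fun α β : Fin M => (P (N + (β:ℕ))).eval (z α)).det := by
    rw [Matrix.det_apply']
    refine Finset.sum_congr rfl fun q _ => ?_
    simp only [Matrix.of_apply, es]
    congr 1
    have e := Equiv.prod_comp q
      (fun α : Fin M => (P (N + ((q.symm α : Fin M) : ℕ))).eval (z α))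
    simp only [Equiv.symm_apply_apply] at e
    rw [← e]
  have h2 : (Matrix.of fun α β : Fin M => (P (N + M - 1 - (β:ℕ))).eval (z α))
      = (Matrix.of fun α β : Fin M => (P (N + (β:ℕ))).eval (z α)).submatrix
          id Fin.revPerm := by
    ext α β
    simp only [Matrix.submatrix_apply, Matrix.of_apply, id_eq, Fin.revPerm_apply]
    congr 2
    have hβ := β.isLt
    simp only [Fin.val_rev]
    omega
  have hsc : ((((Equiv.Perm.sign (Fin.revPerm : Equiv.Perm (Fin M))) : ℤ)) : ℂ)
      = (-1:ℂ)^(M.choose 2) := by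
    rw [sign_revPerm]
    push_cast
    norm_num
  have h3 : ((Matrix.of fun α β : Fin M => (P (N + M - 1 - (β:ℕ))).eval (z α)).det)
      = (-1:ℂ)^(M.choose 2) *
        (Matrix.of fun α β : Fin M => (P (N + (β:ℕ))).eval (z α)).det := by
    rw [h2, Matrix.det_permute', ← hsc]
  rw [h1, h3, ← mul_assoc, ← mul_pow]
  norm_num

lemma comb_sum (P : ℕ → Polynomial ℂ) (h : ℕ → ℂ) (z : Fin M → ℂ) :
    ∑ σ : Equiv.Perm (Fin (N+M)), ∑ τ : Equiv.Perm (Fin N), ∑ ρ : Equiv.Perm (Fin N),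
      ((es σ * es τ * es ρ) *
        (∏ α : Fin M, (P ((σ.symm (Fin.natAdd N α) : Fin (N+M)) : ℕ)).eval (z α))) *
      (∏ i : Fin N, (if ((σ.symm (Fin.castAdd M i) : Fin (N+M)) : ℕ)
          = (((τ * ρ).symm i : Fin N) : ℕ)
        then h ((σ.symm (Fin.castAdd M i) : Fin (N+M)) : ℕ) else 0))
    = ((N.factorial : ℂ))^2 * (∏ i ∈ Finset.range N, h i) *
        ((-1:ℂ)^(M.choose 2) *
          (Matrix.of fun α β : Fin M => (P (N + M - 1 - (β:ℕ))).eval (z α)).det) := by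
  have step1 : ∀ σ : Equiv.Perm (Fin (N+M)), ∀ τ : Equiv.Perm (Fin N),
      (∑ ρ : Equiv.Perm (Fin N),
        ((es σ * es τ * es ρ) *
          (∏ α : Fin M, (P ((σ.symm (Fin.natAdd N α) : Fin (N+M)) : ℕ)).eval (z α))) *
        (∏ i : Fin N, (if ((σ.symm (Fin.castAdd M i) : Fin (N+M)) : ℕ)
            = (((τ * ρ).symm i : Fin N) : ℕ)
          then h ((σ.symm (Fin.castAdd M i) : Fin (N+M)) : ℕ) else 0)))
      = ∑ μ : Equiv.Perm (Fin N),
          ((es σ * es μ) *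
            (∏ α : Fin M, (P ((σ.symm (Fin.natAdd N α) : Fin (N+M)) : ℕ)).eval (z α))) *
          (∏ i : Fin N, (if ((σ.symm (Fin.castAdd M i) : Fin (N+M)) : ℕ)
              = ((μ.symm i : Fin N) : ℕ)
            then h ((σ.symm (Fin.castAdd M i) : Fin (N+M)) : ℕ) else 0)) := by
    intro σ τ
    rw [← Equiv.sum_comp (Equiv.mulLeft τ) (fun μ : Equiv.Perm (Fin N) =>
      ((es σ * es μ) *
        (∏ α : Fin M, (P ((σ.symm (Fin.natAdd N α) : Fin (N+M)) : ℕ)).eval (z α))) *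
      (∏ i : Fin N, (if ((σ.symm (Fin.castAdd M i) : Fin (N+M)) : ℕ)
          = ((μ.symm i : Fin N) : ℕ)
        then h ((σ.symm (Fin.castAdd M i) : Fin (N+M)) : ℕ) else 0)))]
    refine Finset.sum_congr rfl fun ρ _ => ?_
    simp only [Equiv.coe_mulLeft, es_mul]
    ring
    rfl
  -- apply step1, then sum over τ is constant
  have step2 : ∀ σ : Equiv.Perm (Fin (N+M)),
      (∑ τ : Equiv.Perm (Fin N), ∑ ρ : Equiv.Perm (Fin N),
        ((es σ * es τ * es ρ) *
          (∏ α : Fin M, (P ((σ.symm (Fin.natAdd N α) : Fin (N+M)) : ℕ)).eval (z α))) *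
        (∏ i : Fin N, (if ((σ.symm (Fin.castAdd M i) : Fin (N+M)) : ℕ)
            = (((τ * ρ).symm i : Fin N) : ℕ)
          then h ((σ.symm (Fin.castAdd M i) : Fin (N+M)) : ℕ) else 0)))
      = (N.factorial : ℂ) *
        ∑ μ : Equiv.Perm (Fin N),
          ((es σ * es μ) *
            (∏ α : Fin M, (P ((σ.symm (Fin.natAdd N α) : Fin (N+M)) : ℕ)).eval (z α))) *
          (∏ i : Fin N, (if ((σ.symm (Fin.castAdd M i) : Fin (N+M)) : ℕ)
              = ((μ.symm i : Fin N) : ℕ)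
            then h ((σ.symm (Fin.castAdd M i) : Fin (N+M)) : ℕ) else 0)) := by
    intro σ
    rw [Finset.sum_congr rfl (fun τ _ => step1 σ τ), Finset.sum_const, Finset.card_univ,
      Fintype.card_perm, Fintype.card_fin, nsmul_eq_mul]
  rw [Finset.sum_congr rfl (fun σ _ => step2 σ), ← Finset.mul_sum, Finset.sum_comm]
  -- now evaluate, for fixed μ, the sum over σ
  have step3 : ∀ μ : Equiv.Perm (Fin N),
      (∑ σ : Equiv.Perm (Fin (N+M)),
        ((es σ * es μ) *
          (∏ α : Fin M, (P ((σ.symm (Fin.natAdd N α) : Fin (N+M)) : ℕ)).eval (z α))) *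
        (∏ i : Fin N, (if ((σ.symm (Fin.castAdd M i) : Fin (N+M)) : ℕ)
            = ((μ.symm i : Fin N) : ℕ)
          then h ((σ.symm (Fin.castAdd M i) : Fin (N+M)) : ℕ) else 0)))
      = (∏ i ∈ Finset.range N, h i) *
          ((-1:ℂ)^(M.choose 2) *
            (Matrix.of fun α β : Fin M => (P (N + M - 1 - (β:ℕ))).eval (z α)).det) := by
    intro μ
    have hzero : ∀ σ ∈ (Finset.univ : Finset (Equiv.Perm (Fin (N+M)))),
        σ ∉ (Finset.univ : Finset (Equiv.Perm (Fin M))).image (Phi μ) →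
        ((es σ * es μ) *
          (∏ α : Fin M, (P ((σ.symm (Fin.natAdd N α) : Fin (N+M)) : ℕ)).eval (z α))) *
        (∏ i : Fin N, (if ((σ.symm (Fin.castAdd M i) : Fin (N+M)) : ℕ)
            = ((μ.symm i : Fin N) : ℕ)
          then h ((σ.symm (Fin.castAdd M i) : Fin (N+M)) : ℕ) else 0)) = 0 := by
      intro σ _ hnot
      have hnall : ¬ (∀ i : Fin N, σ.symm (Fin.castAdd M i) = Fin.castAdd M (μ.symm i)) := by
        intro hall
        obtain ⟨q, hq⟩ := Phi_mem μ σ hall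
        exact hnot (Finset.mem_image.mpr ⟨q, Finset.mem_univ q, hq.symm⟩)
      push_neg at hnall
      obtain ⟨i₀, hi₀⟩ := hnall
      have : (∏ i : Fin N, (if ((σ.symm (Fin.castAdd M i) : Fin (N+M)) : ℕ)
            = ((μ.symm i : Fin N) : ℕ)
          then h ((σ.symm (Fin.castAdd M i) : Fin (N+M)) : ℕ) else 0)) = 0 := by
        apply Finset.prod_eq_zero (Finset.mem_univ i₀)
        rw [if_neg]
        intro hcond
        exact hi₀ (Fin.ext (by simpa using hcond))
      rw [this, mul_zero]
    rw [← Finset.sum_subset (Finset.subset_univ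
        ((Finset.univ : Finset (Equiv.Perm (Fin M))).image (Phi μ))) hzero]
    rw [Finset.sum_image (fun q _ q' _ hqq => Phi_injective μ hqq)]
    have heval : ∀ q : Equiv.Perm (Fin M),
        ((es (Phi μ q) * es μ) *
          (∏ α : Fin M, (P (((Phi μ q).symm (Fin.natAdd N α) : Fin (N+M)) : ℕ)).eval (z α))) *
        (∏ i : Fin N, (if (((Phi μ q).symm (Fin.castAdd M i) : Fin (N+M)) : ℕ)
            = ((μ.symm i : Fin N) : ℕ)
          then h (((Phi μ q).symm (Fin.castAdd M i) : Fin (N+M)) : ℕ) else 0))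
        = (∏ i ∈ Finset.range N, h i) *
          (es q * ∏ α : Fin M, (P (N + ((q.symm α : Fin M) : ℕ))).eval (z α)) := by
      intro q
      have hW : (∏ i : Fin N, (if (((Phi μ q).symm (Fin.castAdd M i) : Fin (N+M)) : ℕ)
            = ((μ.symm i : Fin N) : ℕ)
          then h (((Phi μ q).symm (Fin.castAdd M i) : Fin (N+M)) : ℕ) else 0))
          = ∏ i ∈ Finset.range N, h i := by
        simp only [Phi_symm_castAdd, Fin.coe_castAdd]
        simp only [eq_self_iff_true, if_true]
        rw [Equiv.prod_comp μ.symm (fun i : Fin N => h (i : ℕ)),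
          Fin.prod_univ_eq_prod_range (fun i => h i) N]
      have hCz : (∏ α : Fin M, (P (((Phi μ q).symm (Fin.natAdd N α) : Fin (N+M)) : ℕ)).eval (z α))
          = ∏ α : Fin M, (P (N + ((q.symm α : Fin M) : ℕ))).eval (z α) := by
        simp only [Phi_symm_natAdd, Fin.coe_natAdd]
      rw [hW, hCz, es_Phi]
      have := es_sq μ
      calc es μ * es q * es μ *
            (∏ α : Fin M, (P (N + ((q.symm α : Fin M) : ℕ))).eval (z α)) *
            (∏ i ∈ Finset.range N, h i)
          = (es μ * es μ) * ((∏ i ∈ Finset.range N, h i) *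
              (es q * ∏ α : Fin M, (P (N + ((q.symm α : Fin M) : ℕ))).eval (z α))) := by ring
        _ = _ := by rw [this, one_mul]
    rw [Finset.sum_congr rfl (fun q _ => heval q), ← Finset.mul_sum, hD_det]
  rw [Finset.sum_congr rfl (fun μ _ => step3 μ), Finset.sum_const, Finset.card_univ,
    Fintype.card_perm, Fintype.card_fin, nsmul_eq_mul]
  ring

/-- **Characteristic polynomial average.** For biorthogonal monic polynomials
`P_0,…,P_{N+M−1}`, `Q_0,…,Q_{N+M−1}` with normalization constants `h_i` (`h_i ≠ 0` for
`i < N`) and pairwise distinct `z_1,…,z_M`,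
`I_N[∏_{α,i}(z_α − x_{L,i})] = (∏_{i<N} h_i / Δ_M(Z)) · det( P_{N+M−β}(z_α) )`. -/
theorem char_poly_average (N M : ℕ) (hN : 1 ≤ N) (hM : 1 ≤ M)
    (wL wR : ℝ → ℂ) (ω : ℝ → ℝ → ℂ)
    (hwL : Measurable wL) (hwR : Measurable wR) (hω : Measurable (Function.uncurry ω))
    (P Q : ℕ → Polynomial ℂ) (h : ℕ → ℂ)
    (hP : ∀ k < N + M, (P k).Monic ∧ (P k).natDegree = k)
    (hQ : ∀ k < N + M, (Q k).Monic ∧ (Q k).natDegree = k)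
    (hh : ∀ i < N, h i ≠ 0)
    (hpairInt : ∀ i < N + M, ∀ j < N + M, Integrable (pairingIntegrand wL wR ω
      (fun x => (P i).eval (x : ℂ)) (fun y => (Q j).eval (y : ℂ))))
    (hbo : ∀ i < N + M, ∀ j < N + M,
      pairing wL wR ω (fun x => (P i).eval (x : ℂ)) (fun y => (Q j).eval (y : ℂ))
        = if i = j then h i else 0)
    (z : Fin M → ℂ) (hz : Function.Injective z)
    (hObs : Integrable (cmmIntegrand N wL wR ω
      fun XL _ => ∏ α : Fin M, ∏ i : Fin N, (z α - (XL i : ℂ)))) :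
    cmmAvg N wL wR ω (fun XL _ => ∏ α : Fin M, ∏ i : Fin N, (z α - (XL i : ℂ)))
      = ((∏ i ∈ Finset.range N, h i) / DeltaC z) *
          (Matrix.of fun α β : Fin M =>
            (P (N + M - 1 - (β : ℕ))).eval (z α)).det := by
  have hint : ∀ (σ : Equiv.Perm (Fin (N+M))) (τ ρ : Equiv.Perm (Fin N)),
      Integrable (fun XY : (Fin N → ℝ) × (Fin N → ℝ) =>
        ∏ i : Fin N, pairingIntegrand wL wR ω
          (fun x => (P ((σ.symm (Fin.castAdd M i) : Fin (N+M)) : ℕ)).eval (x:ℂ))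
          (fun y => (Q (((τ * ρ).symm i : Fin N) : ℕ)).eval (y:ℂ))
          (XY.1 i, XY.2 (τ.symm i))) := fun σ τ ρ =>
    integrable_prod_perm _ (fun i => hpairInt _ (Fin.isLt _) _
      (Nat.lt_of_lt_of_le (Fin.isLt _) (Nat.le_add_right N M))) τ.symm
  have hTval : ∀ (σ : Equiv.Perm (Fin (N+M))) (τ ρ : Equiv.Perm (Fin N)),
      (∫ XY : (Fin N → ℝ) × (Fin N → ℝ),
        ∏ i : Fin N, pairingIntegrand wL wR ω
          (fun x => (P ((σ.symm (Fin.castAdd M i) : Fin (N+M)) : ℕ)).eval (x:ℂ))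
          (fun y => (Q (((τ * ρ).symm i : Fin N) : ℕ)).eval (y:ℂ))
          (XY.1 i, XY.2 (τ.symm i)))
      = ∏ i : Fin N, (if ((σ.symm (Fin.castAdd M i) : Fin (N+M)) : ℕ)
            = (((τ * ρ).symm i : Fin N) : ℕ)
          then h ((σ.symm (Fin.castAdd M i) : Fin (N+M)) : ℕ) else 0) := by
    intro σ τ ρ
    rw [integral_prod_perm]
    refine Finset.prod_congr rfl fun i _ => ?_
    exact hbo ((σ.symm (Fin.castAdd M i) : Fin (N+M)) : ℕ) (Fin.isLt _)
      (((τ * ρ).symm i : Fin N) : ℕ)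
      (Nat.lt_of_lt_of_le (Fin.isLt _) (Nat.le_add_right N M))
  rw [cmmAvg, funext (main1 wL wR ω P Q hP hQ z hz)]
  rw [MeasureTheory.integral_const_mul]
  rw [MeasureTheory.integral_finset_sum _ (fun σ _ => integrable_finset_sum _
    (fun τ _ => integrable_finset_sum _ (fun ρ _ => ((hint σ τ ρ).const_mul _))))]
  have hmid : (∑ σ : Equiv.Perm (Fin (N+M)), ∫ XY : (Fin N → ℝ) × (Fin N → ℝ),
        ∑ τ : Equiv.Perm (Fin N), ∑ ρ : Equiv.Perm (Fin N),
          ((es σ * es τ * es ρ) *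
            (∏ α : Fin M, (P ((σ.symm (Fin.natAdd N α) : Fin (N+M)) : ℕ)).eval (z α))) *
          ∏ i : Fin N, pairingIntegrand wL wR ω
            (fun x => (P ((σ.symm (Fin.castAdd M i) : Fin (N+M)) : ℕ)).eval (x:ℂ))
            (fun y => (Q (((τ * ρ).symm i : Fin N) : ℕ)).eval (y:ℂ))
            (XY.1 i, XY.2 (τ.symm i)))
      = ∑ σ : Equiv.Perm (Fin (N+M)), ∑ τ : Equiv.Perm (Fin N), ∑ ρ : Equiv.Perm (Fin N),
          ((es σ * es τ * es ρ) *
            (∏ α : Fin M, (P ((σ.symm (Fin.natAdd N α) : Fin (N+M)) : ℕ)).eval (z α))) *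
          (∏ i : Fin N, (if ((σ.symm (Fin.castAdd M i) : Fin (N+M)) : ℕ)
              = (((τ * ρ).symm i : Fin N) : ℕ)
            then h ((σ.symm (Fin.castAdd M i) : Fin (N+M)) : ℕ) else 0)) := by
    refine Finset.sum_congr rfl fun σ _ => ?_
    rw [MeasureTheory.integral_finset_sum _
      (fun τ _ => integrable_finset_sum _ (fun ρ _ => ((hint σ τ ρ).const_mul _)))]
    refine Finset.sum_congr rfl fun τ _ => ?_
    rw [MeasureTheory.integral_finset_sum _ (fun ρ _ => ((hint σ τ ρ).const_mul _))]
    refine Finset.sum_congr rfl fun ρ _ => ?_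
    rw [MeasureTheory.integral_const_mul, hTval σ τ ρ]
  rw [hmid, comb_sum]
  have hzne : DeltaC z ≠ 0 := by
    rw [DeltaC, Finset.prod_ne_zero_iff]
    intro i _
    rw [Finset.prod_ne_zero_iff]
    intro j hj
    rw [Finset.mem_Ioi] at hj
    exact sub_ne_zero.mpr fun hc => absurd (hz hc) (ne_of_lt hj)
  have hfact : (((N.factorial : ℂ))^2)⁻¹ * ((N.factorial : ℂ))^2 = 1 :=
    inv_mul_cancel₀ (pow_ne_zero _ (Nat.cast_ne_zero.mpr (Nat.factorial_ne_zero N)))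
  have hsq : ∀ a : ℕ, (-1:ℂ)^a * (-1:ℂ)^a = 1 := fun a => by
    rw [← mul_pow]; norm_num
  have hsign : (-1:ℂ)^(N*M) * (-1:ℂ)^((N+M).choose 2) * (-1:ℂ)^(N.choose 2)
      * (-1:ℂ)^(M.choose 2) = 1 := by
    rw [choose_two_add, pow_add, pow_add]
    calc (-1:ℂ)^(N*M) * ((-1:ℂ)^(N.choose 2) * (-1:ℂ)^(M.choose 2) * (-1:ℂ)^(N*M))
          * (-1:ℂ)^(N.choose 2) * (-1:ℂ)^(M.choose 2)
        = ((-1:ℂ)^(N*M) * (-1:ℂ)^(N*M)) * ((-1:ℂ)^(N.choose 2) * (-1:ℂ)^(N.choose 2))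
          * ((-1:ℂ)^(M.choose 2) * (-1:ℂ)^(M.choose 2)) := by ring
      _ = 1 := by rw [hsq, hsq, hsq]; ring
  rw [div_eq_mul_inv]
  calc (((N.factorial : ℂ))^2)⁻¹ *
        (((DeltaC z)⁻¹ * (-1:ℂ)^(N*M) * (-1:ℂ)^((N+M).choose 2) * (-1:ℂ)^(N.choose 2)) *
          (((N.factorial : ℂ))^2 * (∏ i ∈ Finset.range N, h i) *
            ((-1:ℂ)^(M.choose 2) *
              (Matrix.of fun α β : Fin M => (P (N + M - 1 - (β:ℕ))).eval (z α)).det)))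
      = ((((N.factorial : ℂ))^2)⁻¹ * ((N.factorial : ℂ))^2) *
        ((-1:ℂ)^(N*M) * (-1:ℂ)^((N+M).choose 2) * (-1:ℂ)^(N.choose 2) * (-1:ℂ)^(M.choose 2)) *
        ((∏ i ∈ Finset.range N, h i) * (DeltaC z)⁻¹ *
          (Matrix.of fun α β : Fin M => (P (N + M - 1 - (β:ℕ))).eval (z α)).det) := by ring
    _ = _ := by rw [hfact, hsign]; ring
end CPAMain
end

section
/- Pair correlation of characteristic polynomial inverses, case M ≤ N: Let 1 ≤ M ≤ N, let P_0,…,P_{N−1} and Q_0,…,Q_{N−1} be biorthogonal monic polynomials with normalization constants h_0,…,h_{N−1}, all nonzero, and assume all integrals involved are absolutely convergent. Assume w_L and w_R vanish outside a bounded set [−R, R], let z_1,…,z_M ∈ ℂ be pairwise distinct and w_1,…,w_M ∈ ℂ be pairwise distinct, with |z_α| > R and |w_α| > R for all α. Then I_N[ ∏_{α=1}^M ∏_{i=1}^N (z_α − x_{L,i})^{−1} (w_α − x_{R,i})^{−1} ] = ( ∏_{i=0}^{N−M−1} h_i / (Δ_M(Z) Δ_M(W)) ) · det_{1≤α,β≤M}(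 ⟨(z_α − ·)^{−1}|ω|(w_β − ·)^{−1}⟩ − ∑_{i=0}^{N−M−1} h_i^{−1} ⟨(z_α − ·)^{−1}|ω|Q_i⟩ · ⟨P_i|ω|(w_β − ·)^{−1}⟩ ), where Δ_M(Z) = ∏_{α<β}(z_α − z_β) and Δ_M(W) = ∏_{α<β}(w_α − w_β). -/
open MeasureTheory Matrix Finset

section Split

lemma prod_split_inner {n m : ℕ} (F : Fin (n + m) → ℂ) :
    (∏ j, F j) = (∏ l : Fin n, F (Fin.castAdd m l)) * ∏ α : Fin m, F (Fin.natAdd n α) := by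
  rw [← Equiv.prod_comp finSumFinEquiv F, Fintype.prod_sum_type]
  simp only [finSumFinEquiv_apply_left, finSumFinEquiv_apply_right]

/-- Splitting a product over pairs `i < j` in `Fin (n+m)` into three blocks. -/
lemma prod_Ioi_split {n m : ℕ} (G : Fin (n + m) → Fin (n + m) → ℂ) :
    (∏ i, ∏ j ∈ Finset.Ioi i, G i j) =
      ((∏ k : Fin n, ∏ l ∈ Finset.Ioi k, G (Fin.castAdd m k) (Fin.castAdd m l)) *
        (∏ α : Fin m, ∏ β ∈ Finset.Ioi α, G (Fin.natAdd n α) (Fin.natAdd n β))) *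
      ∏ k : Fin n, ∏ α : Fin m, G (Fin.castAdd m k) (Fin.natAdd n α) := by
  have h0 : ∀ (N : ℕ) (i : Fin N) (F : Fin N → ℂ),
      (∏ j ∈ Finset.Ioi i, F j) = ∏ j, if i < j then F j else 1 := by
    intro N i F
    rw [← Finset.prod_filter]
    congr 1
    ext j; simp
  have hll : ∀ k l : Fin n, (Fin.castAdd m k < Fin.castAdd m l) ↔ k < l := by
    intro k l
    simp only [Fin.lt_def, Fin.coe_castAdd]
  have hlr : ∀ (k : Fin n) (α : Fin m), Fin.castAdd m k < Fin.natAdd n α := by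
    intro k α
    simp only [Fin.lt_def, Fin.coe_castAdd, Fin.coe_natAdd]
    omega
  have hrl : ∀ (α : Fin m) (l : Fin n), ¬ (Fin.natAdd n α < Fin.castAdd m l) := by
    intro α l
    simp only [Fin.lt_def, Fin.coe_castAdd, Fin.coe_natAdd, not_lt]
    omega
  have hrr : ∀ α β : Fin m, (Fin.natAdd n α < Fin.natAdd n β) ↔ α < β := by
    intro α β
    simp only [Fin.lt_def, Fin.coe_natAdd, Nat.add_lt_add_iff_left]
  have h2 : ∀ (k : Fin n) (α : Fin m),
      (if Fin.castAdd m k < Fin.natAdd n α then G (Fin.castAdd m k) (Fin.natAdd n α) else 1)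
        = G (Fin.castAdd m k) (Fin.natAdd n α) := fun k α => if_pos (hlr k α)
  have h3 : ∀ (α : Fin m) (l : Fin n),
      (if Fin.natAdd n α < Fin.castAdd m l then G (Fin.natAdd n α) (Fin.castAdd m l) else 1)
        = 1 := fun α l => if_neg (hrl α l)
  simp only [h0]
  rw [prod_split_inner (fun i => ∏ j, if i < j then G i j else 1)]
  rw [Finset.prod_congr rfl (fun k (_ : k ∈ univ) =>
    prod_split_inner (fun j => if Fin.castAdd m k < j then G (Fin.castAdd m k) j else 1))]
  rw [Finset.prod_congr rfl (fun α (_ : α ∈ univ) =>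
    prod_split_inner (fun j => if Fin.natAdd n α < j then G (Fin.natAdd n α) j else 1))]
  simp only [hll, hrr, h2, h3, Finset.prod_const_one, one_mul]
  simp only [Finset.prod_mul_distrib, ← h0]
  ring

end Split

open Polynomial

section CV

variable {n m : ℕ}

/-- Rows of the auxiliary polynomial family for the Cauchy–Vandermonde determinant. -/
noncomputable def cvPoly (p : Fin n → ℂ[X]) (z : Fin m → ℂ) : (Fin n ⊕ Fin m) → ℂ[X] :=
  Sum.elim (fun k => p k * ∏ α, (C (z α) - X))
    (fun α => ∏ β ∈ Finset.univ.erase α, (C (z β) - X))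

/-- Coefficient matrix of the `cvPoly` family. -/
noncomputable def cvT (p : Fin n → ℂ[X]) (z : Fin m → ℂ) :
    Matrix (Fin (n + m)) (Fin (n + m)) ℂ :=
  Matrix.of fun i l => (cvPoly p z (finSumFinEquiv.symm i)).coeff (l : ℕ)

lemma linFactor_natDegree (a : ℂ) : (C a - X : ℂ[X]).natDegree = 1 := by
  have : (C a - X : ℂ[X]) = -(X - C a) := by ring
  rw [this, natDegree_neg, natDegree_X_sub_C]

lemma linFactor_ne_zero (a : ℂ) : (C a - X : ℂ[X]) ≠ 0 := by
  intro h
  have := linFactor_natDegree a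
  rw [h] at this
  simp at this

lemma prod_linFactor_natDegree (z : Fin m → ℂ) (s : Finset (Fin m)) :
    (∏ β ∈ s, (C (z β) - X : ℂ[X])).natDegree = s.card := by
  rw [Polynomial.natDegree_prod _ _ (fun β _ => linFactor_ne_zero (z β))]
  simp [linFactor_natDegree]

lemma prod_linFactor_ne_zero (z : Fin m → ℂ) (s : Finset (Fin m)) :
    (∏ β ∈ s, (C (z β) - X : ℂ[X])) ≠ 0 :=
  Finset.prod_ne_zero_iff.mpr fun β _ => linFactor_ne_zero (z β)

lemma cvPoly_natDegree_lt (p : Fin n → ℂ[X])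
    (hp : ∀ k, (p k).Monic ∧ (p k).natDegree = (k : ℕ)) (z : Fin m → ℂ)
    (i : Fin n ⊕ Fin m) : (cvPoly p z i).natDegree < n + m := by
  rcases i with k | α
  · have hpk := (hp k).1.ne_zero
    rw [cvPoly, Sum.elim_inl, natDegree_mul hpk (prod_linFactor_ne_zero z univ), (hp k).2,
      prod_linFactor_natDegree]
    simp only [Finset.card_univ, Fintype.card_fin]
    omega
  · have hm : 0 < m := α.pos
    rw [cvPoly, Sum.elim_inr, prod_linFactor_natDegree, Finset.card_erase_of_mem (mem_univ α)]
    simp only [Finset.card_univ, Fintype.card_fin]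
    omega

lemma cvT_mul_vandermonde (p : Fin n → ℂ[X])
    (hp : ∀ k, (p k).Monic ∧ (p k).natDegree = (k : ℕ)) (z : Fin m → ℂ)
    (v : Fin (n + m) → ℂ) :
    cvT p z * (Matrix.vandermonde v)ᵀ =
      Matrix.of fun i j => (cvPoly p z (finSumFinEquiv.symm i)).eval (v j) := by
  ext i j
  rw [Matrix.mul_apply]
  simp only [cvT, Matrix.of_apply, Matrix.transpose_apply, Matrix.vandermonde_apply]
  rw [eval_eq_sum_range' (cvPoly_natDegree_lt p hp z _) (v j),
    ← Fin.sum_univ_eq_sum_range (fun l => (cvPoly p z (finSumFinEquiv.symm i)).coeff l * v j ^ l)]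

lemma eval_prod_linFactor (z : Fin m → ℂ) (s : Finset (Fin m)) (u : ℂ) :
    (∏ β ∈ s, (C (z β) - X : ℂ[X])).eval u = ∏ β ∈ s, (z β - u) := by
  rw [Polynomial.eval_prod]
  simp

lemma cvT_det (p : Fin n → ℂ[X])
    (hp : ∀ k, (p k).Monic ∧ (p k).natDegree = (k : ℕ)) (z : Fin m → ℂ)
    (hz : Function.Injective z) : (cvT p z).det = DeltaC z := by
  classical
  set S : ℝ := ∑ α, ‖z α‖ with hS
  have hS0 : 0 ≤ S := Finset.sum_nonneg fun α _ => norm_nonneg _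
  set η : Fin n → ℂ := fun k => ((1 + S + (k : ℕ) : ℝ) : ℂ) with hηdef
  have hηinj : Function.Injective η := by
    intro k l hkl
    simp only [hηdef, Complex.ofReal_inj] at hkl
    have h2 : ((k : ℕ) : ℝ) = ((l : ℕ) : ℝ) := by linarith
    exact Fin.val_injective (Nat.cast_injective h2)
  have hηz : ∀ (k : Fin n) (α : Fin m), η k ≠ z α := by
    intro k α hne
    have h1 : ‖z α‖ ≤ S :=
      Finset.single_le_sum (f := fun α => ‖z α‖)
        (fun i _ => norm_nonneg _) (mem_univ α)
    have h2 : ‖η k‖ = 1 + S + (k : ℕ) := by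
      simp only [hηdef]
      rw [Complex.norm_real, Real.norm_eq_abs, abs_of_nonneg (by positivity)]
    rw [hne] at h2
    have h3 : (0:ℝ) ≤ (k : ℕ) := Nat.cast_nonneg _
    linarith
  set ξ : Fin (n + m) → ℂ := fun j => Sum.elim η z (finSumFinEquiv.symm j) with hξdef
  have hξl : ∀ k : Fin n, ξ (Fin.castAdd m k) = η k := by
    intro k; simp [hξdef, finSumFinEquiv_symm_apply_castAdd]
  have hξr : ∀ α : Fin m, ξ (Fin.natAdd n α) = z α := by
    intro α; simp [hξdef, finSumFinEquiv_symm_apply_natAdd]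
  have hξinj : Function.Injective ξ := by
    have hse : Function.Injective (Sum.elim η z) := by
      intro s t hst
      rcases s with k | α <;> rcases t with l | β <;>
        simp only [Sum.elim_inl, Sum.elim_inr] at hst
      · rw [hηinj hst]
      · exact absurd hst (hηz k β)
      · exact absurd hst.symm (hηz l α)
      · rw [hz hst]
    exact hse.comp (Equiv.injective _)
  have hVxi : (Matrix.vandermonde ξ).det ≠ 0 :=
    Matrix.det_vandermonde_ne_zero_iff.mpr hξinj
  -- the evaluation matrix
  set Mev : Matrix (Fin (n + m)) (Fin (n + m)) ℂ :=
    Matrix.of fun i j => (cvPoly p z (finSumFinEquiv.symm i)).eval (ξ j) with hMevdef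
  have hMev : cvT p z * (Matrix.vandermonde ξ)ᵀ = Mev := cvT_mul_vandermonde p hp z ξ
  -- block structure of Mev
  set TL : Matrix (Fin n) (Fin n) ℂ :=
    Matrix.of fun k l => (cvPoly p z (Sum.inl k)).eval (η l) with hTLdef
  set BL : Matrix (Fin m) (Fin n) ℂ :=
    Matrix.of fun α l => (cvPoly p z (Sum.inr α)).eval (η l) with hBLdef
  set d : Fin m → ℂ := fun α => ∏ β ∈ Finset.univ.erase α, (z β - z α) with hddef
  have hMsum : Mev.submatrix finSumFinEquiv finSumFinEquiv =
      Matrix.fromBlocks TL 0 BL (Matrix.diagonal d) := by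
    ext i j
    have bigsimp := 0
    rcases i with k | α <;> rcases j with l | β <;>
      simp only [Matrix.submatrix_apply, hMevdef, Matrix.of_apply, Equiv.symm_apply_apply,
        finSumFinEquiv_apply_left, finSumFinEquiv_apply_right,
        finSumFinEquiv_symm_apply_castAdd, finSumFinEquiv_symm_apply_natAdd, hξl, hξr,
        Matrix.fromBlocks_apply₁₁, Matrix.fromBlocks_apply₁₂, Matrix.fromBlocks_apply₂₁,
        Matrix.fromBlocks_apply₂₂, Matrix.zero_apply, hTLdef, hBLdef]
    · -- (p k * E).eval (z β) = 0
      rw [cvPoly, Sum.elim_inl, eval_mul, eval_prod_linFactor]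
      rw [Finset.prod_eq_zero (mem_univ β) (sub_self (z β))]
      simp
    · -- (Eα).eval (z β) = diagonal d α β
      by_cases hab : α = β
      · subst hab
        rw [Matrix.diagonal_apply_eq, cvPoly, Sum.elim_inr, eval_prod_linFactor]
      · rw [Matrix.diagonal_apply_ne _ hab, cvPoly, Sum.elim_inr, eval_prod_linFactor]
        exact Finset.prod_eq_zero (Finset.mem_erase.mpr ⟨Ne.symm hab, mem_univ β⟩)
          (sub_self (z β))
  have hdetMev : Mev.det = TL.det * ∏ α, d α := by
    rw [← Matrix.det_submatrix_equiv_self finSumFinEquiv Mev, hMsum,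
      Matrix.det_fromBlocks_zero₁₂, Matrix.det_diagonal]
  -- determinant of TL
  have hTL2 : TL = Matrix.of fun k l => (∏ α, (z α - η l)) * (p k).eval (η l) := by
    ext k l
    simp only [hTLdef, Matrix.of_apply, cvPoly, Sum.elim_inl, eval_mul, eval_prod_linFactor]
    ring
  have hdetP : (Matrix.of fun k l => (p k).eval (η l)).det = (Matrix.vandermonde η).det := by
    rw [Matrix.det_eval_matrixOfPolynomials_eq_det_vandermonde η p (fun k => (hp k).2)
      (fun k => (hp k).1), ← Matrix.det_transpose]
    congr 1
  have hdetTL : TL.det = (∏ l, ∏ α, (z α - η l)) * (Matrix.vandermonde η).det := by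
    rw [hTL2, show (Matrix.of fun k l => (∏ α, (z α - η l)) * (p k).eval (η l)).det =
        (∏ l, ∏ α, (z α - η l)) * (Matrix.of fun k l => (p k).eval (η l)).det from
        Matrix.det_mul_row (fun l => ∏ α, (z α - η l)) (Matrix.of fun k l => (p k).eval (η l)),
      hdetP]
  -- off-diagonal product
  have hoff : (∏ α, d α) =
      (∏ α : Fin m, ∏ β ∈ Finset.Ioi α, (z β - z α)) * DeltaC z := by
    have hod := Finset.prod_prod_Ioi_mul_eq_prod_prod_off_diag (f := fun i j => z i - z j)
    have hce : ∀ α : Fin m, ({α}ᶜ : Finset (Fin m)) = Finset.univ.erase α := fun α => by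
      ext β; simp [eq_comm]
    simp only [hce] at hod
    calc (∏ α, d α) = ∏ i : Fin m, ∏ j ∈ Finset.Ioi i, ((z j - z i) * (z i - z j)) := by
          simp only [hddef]
          convert hod.symm using 2 with α hα
      _ = (∏ α : Fin m, ∏ β ∈ Finset.Ioi α, (z β - z α)) * DeltaC z := by
          simp only [Finset.prod_mul_distrib, DeltaC]
  -- split the Vandermonde of ξ
  have hsplit : (Matrix.vandermonde ξ).det =
      ((Matrix.vandermonde η).det * ∏ α : Fin m, ∏ β ∈ Finset.Ioi α, (z β - z α)) *
        ∏ k : Fin n, ∏ α : Fin m, (z α - η k) := by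
    rw [Matrix.det_vandermonde ξ, prod_Ioi_split (fun i j => ξ j - ξ i),
      Matrix.det_vandermonde η]
    simp only [hξl, hξr]
  -- final cancellation
  have key : (cvT p z).det * (Matrix.vandermonde ξ).det =
      DeltaC z * (Matrix.vandermonde ξ).det := by
    have h1 : (cvT p z).det * (Matrix.vandermonde ξ).det = Mev.det := by
      rw [← hMev, Matrix.det_mul, Matrix.det_transpose]
    rw [h1, hdetMev, hdetTL, hoff, hsplit]
    have hswap : (∏ l, ∏ α, (z α - η l)) = ∏ k : Fin n, ∏ α : Fin m, (z α - η k) := rfl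
    ring
  exact mul_right_cancel₀ hVxi key

end CV

/-- The Cauchy–Vandermonde determinant identity. -/
lemma cv_identity {n m : ℕ} (p : Fin n → ℂ[X])
    (hp : ∀ k, (p k).Monic ∧ (p k).natDegree = (k : ℕ)) (z : Fin m → ℂ)
    (hz : Function.Injective z) (x : Fin (n + m) → ℝ)
    (hzx : ∀ (α : Fin m) (j : Fin (n + m)), z α ≠ ((x j : ℝ) : ℂ)) :
    (Matrix.of fun i j => Sum.elim (fun k : Fin n => (p k).eval ((x j : ℝ) : ℂ))
        (fun α => (z α - ((x j : ℝ) : ℂ))⁻¹) (finSumFinEquiv.symm i)).det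
      * (∏ j, ∏ α, (z α - ((x j : ℝ) : ℂ)))
    = DeltaC z * ∏ i, ∏ j ∈ Finset.Ioi i, (((x j : ℝ) : ℂ) - ((x i : ℝ) : ℂ)) := by
  classical
  set xc : Fin (n + m) → ℂ := fun j => ((x j : ℝ) : ℂ) with hxc
  set A : Matrix (Fin (n + m)) (Fin (n + m)) ℂ :=
    Matrix.of fun i j => Sum.elim (fun k : Fin n => (p k).eval (xc j))
      (fun α => (z α - xc j)⁻¹) (finSumFinEquiv.symm i) with hA
  have h1 : A * Matrix.diagonal (fun j => ∏ α, (z α - xc j)) =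
      Matrix.of fun i j => (cvPoly p z (finSumFinEquiv.symm i)).eval (xc j) := by
    ext i j
    rw [Matrix.mul_diagonal]
    rcases hi : finSumFinEquiv.symm i with k | α <;>
      simp only [hA, Matrix.of_apply, hi, Sum.elim_inl, Sum.elim_inr]
    · rw [cvPoly, Sum.elim_inl, eval_mul, eval_prod_linFactor]
    · rw [cvPoly, Sum.elim_inr, eval_prod_linFactor,
        ← Finset.mul_prod_erase Finset.univ (fun β => z β - xc j) (mem_univ α),
        inv_mul_cancel_left₀ (sub_ne_zero.mpr (hzx α j))]
  have h2 : cvT p z * (Matrix.vandermonde xc)ᵀ =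
      Matrix.of fun i j => (cvPoly p z (finSumFinEquiv.symm i)).eval (xc j) :=
    cvT_mul_vandermonde p hp z xc
  have h3 : A.det * ∏ j, ∏ α, (z α - xc j) = DeltaC z * ∏ i, ∏ j ∈ Finset.Ioi i, (xc j - xc i) := by
    have := congrArg Matrix.det (h1.trans h2.symm)
    rw [Matrix.det_mul, Matrix.det_diagonal, Matrix.det_mul, Matrix.det_transpose,
      Matrix.det_vandermonde, cvT_det p hp z hz] at this
    exact this
  exact h3


section MeasureLemmas

open MeasureTheory

variable {N : ℕ}

/-- The coupling equivalence used to factor paired integrals. -/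
noncomputable def pairEquiv (N : ℕ) (ρ : Equiv.Perm (Fin N)) :
    (Fin N → ℝ × ℝ) ≃ᵐ (Fin N → ℝ) × (Fin N → ℝ) :=
  (MeasurableEquiv.arrowProdEquivProdArrow ℝ ℝ (Fin N)).trans
    ((MeasurableEquiv.refl (Fin N → ℝ)).prodCongr
      (MeasurableEquiv.piCongrLeft (fun _ => ℝ) (ρ : Fin N ≃ Fin N)))

lemma pairEquiv_measurePreserving (N : ℕ) (ρ : Equiv.Perm (Fin N)) :
    MeasurePreserving (pairEquiv N ρ) volume volume := by
  have h1 := MeasureTheory.volume_measurePreserving_arrowProdEquivProdArrow ℝ ℝ (Fin N)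
  have h2 : MeasurePreserving
      ((MeasurableEquiv.refl (Fin N → ℝ)).prodCongr
        (MeasurableEquiv.piCongrLeft (fun _ => ℝ) (ρ : Fin N ≃ Fin N)))
      volume volume := by
    have := (MeasurePreserving.id (volume : Measure (Fin N → ℝ))).prod
      (MeasureTheory.volume_measurePreserving_piCongrLeft (fun _ => ℝ) ρ)
    exact this
  exact h2.comp h1

lemma pairEquiv_comp_eq (N : ℕ) (ρ : Equiv.Perm (Fin N)) (F : Fin N → ℝ × ℝ → ℂ)
    (s : Fin N → ℝ × ℝ) :
    (∏ j, F j ((pairEquiv N ρ s).1 j, (pairEquiv N ρ s).2 (ρ j))) = ∏ j, F j (s j) := by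
  refine Finset.prod_congr rfl fun j _ => ?_
  have h1 : (pairEquiv N ρ s).1 j = (s j).1 := rfl
  have h2 : (pairEquiv N ρ s).2 (ρ j) = (s j).2 := by
    show (MeasurableEquiv.piCongrLeft (fun _ => ℝ) (ρ : Fin N ≃ Fin N))
      (fun c => (s c).2) (ρ j) = (s j).2
    rw [MeasurableEquiv.piCongrLeft_apply_apply]
  rw [h1, h2]

lemma pair_integrable (F : Fin N → ℝ × ℝ → ℂ) (hF : ∀ j, Integrable (F j))
    (ρ : Equiv.Perm (Fin N)) :
    Integrable (fun X : (Fin N → ℝ) × (Fin N → ℝ) => ∏ j, F j (X.1 j, X.2 (ρ j))) := by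
  rw [← (pairEquiv_measurePreserving N ρ).integrable_comp_emb
    (pairEquiv N ρ).measurableEmbedding]
  have : ((fun X : (Fin N → ℝ) × (Fin N → ℝ) => ∏ j, F j (X.1 j, X.2 (ρ j))) ∘
      (pairEquiv N ρ)) = fun s => ∏ j, F j (s j) := by
    funext s
    exact pairEquiv_comp_eq N ρ F s
  rw [this]
  exact Integrable.fintype_prod hF

lemma pair_integral (F : Fin N → ℝ × ℝ → ℂ) (hF : ∀ j, Integrable (F j))
    (ρ : Equiv.Perm (Fin N)) :
    ∫ X : (Fin N → ℝ) × (Fin N → ℝ), ∏ j, F j (X.1 j, X.2 (ρ j)) = ∏ j, ∫ s, F j s := by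
  rw [← (pairEquiv_measurePreserving N ρ).integral_comp'
    (fun X : (Fin N → ℝ) × (Fin N → ℝ) => ∏ j, F j (X.1 j, X.2 (ρ j)))]
  have : (fun s : Fin N → ℝ × ℝ => ∏ j, F j ((pairEquiv N ρ s).1 j, (pairEquiv N ρ s).2 (ρ j)))
      = fun s => ∏ j, F j (s j) := by
    funext s
    exact pairEquiv_comp_eq N ρ F s
  rw [this]
  exact MeasureTheory.integral_fintype_prod_eq_prod F

end MeasureLemmas


section Andreief

open MeasureTheory Equiv

/-- The Andréief (generalized Gram) integration identity. -/
lemma andreief {N : ℕ} (wL wR : ℝ → ℂ) (ω : ℝ → ℝ → ℂ) (a b : Fin N → ℝ → ℂ)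
    (hab : ∀ i j, Integrable (pairingIntegrand wL wR ω (a i) (b j))) :
    ∫ X : (Fin N → ℝ) × (Fin N → ℝ),
      ((∏ i, wL (X.1 i) * wR (X.2 i)) * (Matrix.of fun i j => a i (X.1 j)).det *
        (Matrix.of fun i j => ω (X.1 i) (X.2 j)).det *
        (Matrix.of fun i j => b i (X.2 j)).det)
      = (N.factorial : ℂ) ^ 2 * (Matrix.of fun i j => pairing wL wR ω (a i) (b j)).det := by
  classical
  have hsq : ∀ γ : Equiv.Perm (Fin N),
      ((Equiv.Perm.sign γ : ℤ) : ℂ) * ((Equiv.Perm.sign γ : ℤ) : ℂ) = 1 := by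
    intro γ
    rcases Int.units_eq_one_or (Equiv.Perm.sign γ) with h | h <;> simp [h]
  -- pointwise expansion of the integrand
  have hpt : ∀ X : (Fin N → ℝ) × (Fin N → ℝ),
      ((∏ i, wL (X.1 i) * wR (X.2 i)) * (Matrix.of fun i j => a i (X.1 j)).det *
        (Matrix.of fun i j => ω (X.1 i) (X.2 j)).det *
        (Matrix.of fun i j => b i (X.2 j)).det)
      = ∑ σ : Equiv.Perm (Fin N), ∑ π : Equiv.Perm (Fin N), ∑ τ : Equiv.Perm (Fin N),
          (((Equiv.Perm.sign σ : ℤ) : ℂ) * ((Equiv.Perm.sign π : ℤ) : ℂ) *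
            ((Equiv.Perm.sign τ : ℤ) : ℂ)) *
          ∏ j, pairingIntegrand wL wR ω (a (τ j)) (b (σ (π⁻¹ j))) (X.1 j, X.2 (π⁻¹ j)) := by
    intro X
    rw [Matrix.det_apply' (Matrix.of fun i j => a i (X.1 j)),
      Matrix.det_apply' (Matrix.of fun i j => ω (X.1 i) (X.2 j)),
      Matrix.det_apply' (Matrix.of fun i j => b i (X.2 j))]
    simp only [Matrix.of_apply, Finset.sum_mul, Finset.mul_sum]
    refine Finset.sum_congr rfl fun σ _ => Finset.sum_congr rfl fun π _ =>
      Finset.sum_congr rfl fun τ _ => ?_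
    have h1 : ∏ j, ω (X.1 j) (X.2 (π⁻¹ j)) = ∏ j, ω (X.1 (π j)) (X.2 j) := by
      have := Equiv.prod_comp (π⁻¹ : Equiv.Perm (Fin N))
        (fun j => ω (X.1 (π j)) (X.2 j))
      simpa using this
    have h2 : ∏ j, wR (X.2 j) = ∏ j, wR (X.2 (π⁻¹ j)) :=
      (Equiv.prod_comp (π⁻¹ : Equiv.Perm (Fin N)) (fun j => wR (X.2 j))).symm
    have h3 : ∏ j, b (σ j) (X.2 j) = ∏ j, b (σ (π⁻¹ j)) (X.2 (π⁻¹ j)) :=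
      (Equiv.prod_comp (π⁻¹ : Equiv.Perm (Fin N)) (fun j => b (σ j) (X.2 j))).symm
    simp only [pairingIntegrand, Finset.prod_mul_distrib]
    rw [← h1, ← h2, ← h3]
    ring
  simp only [hpt]
  -- integrability of each summand
  have hint1 : ∀ σ π τ : Equiv.Perm (Fin N),
      Integrable (fun X : (Fin N → ℝ) × (Fin N → ℝ) =>
        (((Equiv.Perm.sign σ : ℤ) : ℂ) * ((Equiv.Perm.sign π : ℤ) : ℂ) *
          ((Equiv.Perm.sign τ : ℤ) : ℂ)) *
        ∏ j, pairingIntegrand wL wR ω (a (τ j)) (b (σ (π⁻¹ j))) (X.1 j, X.2 (π⁻¹ j))) :=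
    fun σ π τ => (pair_integrable _ (fun j => hab (τ j) (σ (π⁻¹ j))) π⁻¹).const_mul _
  have hterm : ∀ σ π τ : Equiv.Perm (Fin N),
      (∫ X : (Fin N → ℝ) × (Fin N → ℝ),
        (((Equiv.Perm.sign σ : ℤ) : ℂ) * ((Equiv.Perm.sign π : ℤ) : ℂ) *
          ((Equiv.Perm.sign τ : ℤ) : ℂ)) *
          ∏ j, pairingIntegrand wL wR ω (a (τ j)) (b (σ (π⁻¹ j))) (X.1 j, X.2 (π⁻¹ j)))
      = (((Equiv.Perm.sign σ : ℤ) : ℂ) * ((Equiv.Perm.sign π : ℤ) : ℂ) *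
          ((Equiv.Perm.sign τ : ℤ) : ℂ)) *
          ∏ j, pairing wL wR ω (a (τ j)) (b (σ (π⁻¹ j))) := by
    intro σ π τ
    rw [MeasureTheory.integral_const_mul,
      pair_integral _ (fun j => hab (τ j) (σ (π⁻¹ j))) π⁻¹]
    rfl
  rw [integral_finset_sum _ (fun σ _ => integrable_finset_sum _ (fun π _ =>
    integrable_finset_sum _ (fun τ _ => hint1 σ π τ)))]
  trans (∑ σ : Equiv.Perm (Fin N), ∑ π : Equiv.Perm (Fin N), ∑ τ : Equiv.Perm (Fin N),
      (((Equiv.Perm.sign σ : ℤ) : ℂ) * ((Equiv.Perm.sign π : ℤ) : ℂ) *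
        ((Equiv.Perm.sign τ : ℤ) : ℂ)) *
      ∏ j, pairing wL wR ω (a (τ j)) (b (σ (π⁻¹ j))))
  · refine Finset.sum_congr rfl fun σ _ => ?_
    rw [integral_finset_sum _ (fun π _ => integrable_finset_sum _
      (fun τ _ => hint1 σ π τ))]
    refine Finset.sum_congr rfl fun π _ => ?_
    rw [integral_finset_sum _ (fun τ _ => hint1 σ π τ)]
    exact Finset.sum_congr rfl fun τ _ => hterm σ π τ
  · -- pure algebra: collapse the permutation sums to the determinant
    have hin : ∀ σ π : Equiv.Perm (Fin N),
        (∑ τ : Equiv.Perm (Fin N),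
          (((Equiv.Perm.sign σ : ℤ) : ℂ) * ((Equiv.Perm.sign π : ℤ) : ℂ) *
            ((Equiv.Perm.sign τ : ℤ) : ℂ)) *
          ∏ j, pairing wL wR ω (a (τ j)) (b (σ (π⁻¹ j))))
        = (Matrix.of fun i j => pairing wL wR ω (a i) (b j)).det := by
      intro σ π
      have hre := Fintype.sum_equiv
        ((Equiv.inv (Equiv.Perm (Fin N))).trans (Equiv.mulLeft (σ * π⁻¹)))
        (fun τ : Equiv.Perm (Fin N) =>
          (((Equiv.Perm.sign σ : ℤ) : ℂ) * ((Equiv.Perm.sign π : ℤ) : ℂ) *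
            ((Equiv.Perm.sign τ : ℤ) : ℂ)) *
          ∏ j, pairing wL wR ω (a (τ j)) (b (σ (π⁻¹ j))))
        (fun ρ : Equiv.Perm (Fin N) => ((Equiv.Perm.sign ρ : ℤ) : ℂ) *
          ∏ k, pairing wL wR ω (a k) (b (ρ k)))
        ?_
      · rw [hre, ← Matrix.det_transpose (Matrix.of fun i j => pairing wL wR ω (a i) (b j)),
          Matrix.det_apply']
        exact Finset.sum_congr rfl fun ρ _ => by
          simp only [Matrix.transpose_apply, Matrix.of_apply]
      · intro τ
        have happ : ((Equiv.inv (Equiv.Perm (Fin N))).trans (Equiv.mulLeft (σ * π⁻¹))) τ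
            = σ * π⁻¹ * τ⁻¹ := by
          simp [mul_assoc]
        rw [happ]
        have hprod : (∏ k, pairing wL wR ω (a k) (b ((σ * π⁻¹ * τ⁻¹) k)))
            = ∏ j, pairing wL wR ω (a (τ j)) (b (σ (π⁻¹ j))) := by
          rw [← Equiv.prod_comp τ
            (fun k => pairing wL wR ω (a k) (b ((σ * π⁻¹ * τ⁻¹) k)))]
          refine Finset.prod_congr rfl fun j _ => ?_
          simp [Equiv.Perm.mul_apply]
        have hsign : ((Equiv.Perm.sign (σ * π⁻¹ * τ⁻¹) : ℤ) : ℂ)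
            = ((Equiv.Perm.sign σ : ℤ) : ℂ) * ((Equiv.Perm.sign π : ℤ) : ℂ) *
              ((Equiv.Perm.sign τ : ℤ) : ℂ) := by
          simp only [_root_.map_mul, Equiv.Perm.sign_inv, Units.val_mul, Int.cast_mul]
        rw [hsign, hprod]
    calc (∑ σ : Equiv.Perm (Fin N), ∑ π : Equiv.Perm (Fin N),
          ∑ τ : Equiv.Perm (Fin N),
          (((Equiv.Perm.sign σ : ℤ) : ℂ) * ((Equiv.Perm.sign π : ℤ) : ℂ) *
            ((Equiv.Perm.sign τ : ℤ) : ℂ)) *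
          ∏ j, pairing wL wR ω (a (τ j)) (b (σ (π⁻¹ j))))
        = ∑ _σ : Equiv.Perm (Fin N), ∑ _π : Equiv.Perm (Fin N),
            (Matrix.of fun i j => pairing wL wR ω (a i) (b j)).det := by
          exact Finset.sum_congr rfl fun σ _ => Finset.sum_congr rfl fun π _ => hin σ π
      _ = (N.factorial : ℂ) ^ 2 *
            (Matrix.of fun i j => pairing wL wR ω (a i) (b j)).det := by
          simp only [Finset.sum_const, Finset.card_univ, Fintype.card_perm, Fintype.card_fin,
            smul_smul, nsmul_eq_mul]
          push_cast
          ring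

end Andreief

/-- **Pair correlation of characteristic polynomial inverses, case `M ≤ N`.** For
biorthogonal monic polynomials with nonzero normalization constants, weights supported in
`[−R,R]`, and pairwise distinct `z_α`, `w_α` of modulus `> R`,
`I_N[∏_{α,i}(z_α − x_{L,i})⁻¹(w_α − x_{R,i})⁻¹]
 = (∏_{i<N−M} h_i / (Δ_M(Z)Δ_M(W))) ·
   det( ⟨(z_α−·)⁻¹|ω|(w_β−·)⁻¹⟩ − ∑_{i<N−M} h_i⁻¹ ⟨(z_α−·)⁻¹|ω|Q_i⟩⟨P_i|ω|(w_β−·)⁻¹⟩ )`. -/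
theorem pair_correlation_char_poly_inverse_le (N M : ℕ) (hM : 1 ≤ M) (hMN : M ≤ N)
    (wL wR : ℝ → ℂ) (ω : ℝ → ℝ → ℂ)
    (hwL : Measurable wL) (hwR : Measurable wR) (hω : Measurable (Function.uncurry ω))
    (P Q : ℕ → Polynomial ℂ) (h : ℕ → ℂ)
    (hP : ∀ k < N, (P k).Monic ∧ (P k).natDegree = k)
    (hQ : ∀ k < N, (Q k).Monic ∧ (Q k).natDegree = k)
    (hh : ∀ i < N, h i ≠ 0)
    (hpairInt : ∀ i < N, ∀ j < N, Integrable (pairingIntegrand wL wR ω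
      (fun x => (P i).eval (x : ℂ)) (fun y => (Q j).eval (y : ℂ))))
    (hbo : ∀ i < N, ∀ j < N,
      pairing wL wR ω (fun x => (P i).eval (x : ℂ)) (fun y => (Q j).eval (y : ℂ))
        = if i = j then h i else 0)
    (R : ℝ) (hsuppL : ∀ x : ℝ, R < |x| → wL x = 0) (hsuppR : ∀ x : ℝ, R < |x| → wR x = 0)
    (z w : Fin M → ℂ) (hz : Function.Injective z) (hw : Function.Injective w)
    (hzR : ∀ α, R < ‖z α‖) (hwRad : ∀ α, R < ‖w α‖)
    (hInt1 : ∀ (α β : Fin M), Integrable (pairingIntegrand wL wR ω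
      (fun x => (z α - (x : ℂ))⁻¹) (fun y => (w β - (y : ℂ))⁻¹)))
    (hInt2 : ∀ (α : Fin M), ∀ j < N, Integrable (pairingIntegrand wL wR ω
      (fun x => (z α - (x : ℂ))⁻¹) (fun y => (Q j).eval (y : ℂ))))
    (hInt3 : ∀ i < N, ∀ (β : Fin M), Integrable (pairingIntegrand wL wR ω
      (fun x => (P i).eval (x : ℂ)) (fun y => (w β - (y : ℂ))⁻¹)))
    (hObs : Integrable (cmmIntegrand N wL wR ω
      fun XL XR => ∏ α : Fin M, ∏ i : Fin N,
        (z α - (XL i : ℂ))⁻¹ * (w α - (XR i : ℂ))⁻¹)) :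
    cmmAvg N wL wR ω (fun XL XR => ∏ α : Fin M, ∏ i : Fin N,
        (z α - (XL i : ℂ))⁻¹ * (w α - (XR i : ℂ))⁻¹)
      = ((∏ i ∈ Finset.range (N - M), h i) / (DeltaC z * DeltaC w)) *
          (Matrix.of fun α β : Fin M =>
            pairing wL wR ω (fun x => (z α - (x : ℂ))⁻¹) (fun y => (w β - (y : ℂ))⁻¹)
              - ∑ i ∈ Finset.range (N - M), (h i)⁻¹ *
                  (pairing wL wR ω (fun x => (z α - (x : ℂ))⁻¹)
                    (fun y => (Q i).eval (y : ℂ)) *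
                   pairing wL wR ω (fun x => (P i).eval (x : ℂ))
                    (fun y => (w β - (y : ℂ))⁻¹))).det := by
  classical
  obtain ⟨n, rfl⟩ : ∃ n, N = n + M := ⟨N - M, (Nat.sub_add_cancel hMN).symm⟩
  simp only [Nat.add_sub_cancel]
  have hkn : ∀ k : Fin n, (k : ℕ) < n + M :=
    fun k => lt_of_lt_of_le k.2 (Nat.le_add_right n M)
  have hDz : DeltaC z ≠ 0 := by
    rw [DeltaC]
    refine Finset.prod_ne_zero_iff.mpr fun α _ =>
      Finset.prod_ne_zero_iff.mpr fun β hβ => sub_ne_zero.mpr fun hzz => ?_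
    exact absurd (hz hzz) (Finset.mem_Ioi.mp hβ).ne
  have hDw : DeltaC w ≠ 0 := by
    rw [DeltaC]
    refine Finset.prod_ne_zero_iff.mpr fun α _ =>
      Finset.prod_ne_zero_iff.mpr fun β hβ => sub_ne_zero.mpr fun hzz => ?_
    exact absurd (hw hzz) (Finset.mem_Ioi.mp hβ).ne
  set a : Fin (n + M) → ℝ → ℂ := fun i => Sum.elim
      (fun k : Fin n => fun u : ℝ => (P (k : ℕ)).eval ((u : ℝ) : ℂ))
      (fun α : Fin M => fun u : ℝ => (z α - ((u : ℝ) : ℂ))⁻¹) (finSumFinEquiv.symm i)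
    with hadef
  set b : Fin (n + M) → ℝ → ℂ := fun i => Sum.elim
      (fun k : Fin n => fun u : ℝ => (Q (k : ℕ)).eval ((u : ℝ) : ℂ))
      (fun α : Fin M => fun u : ℝ => (w α - ((u : ℝ) : ℂ))⁻¹) (finSumFinEquiv.symm i)
    with hbdef
  have hInt : ∀ i j, Integrable (pairingIntegrand wL wR ω (a i) (b j)) := by
    intro i j
    rcases hsi : finSumFinEquiv.symm i with k | α <;>
      rcases hsj : finSumFinEquiv.symm j with l | β <;>
      simp only [hadef, hbdef, hsi, hsj, Sum.elim_inl, Sum.elim_inr]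
    · exact hpairInt _ (hkn k) _ (hkn l)
    · exact hInt3 _ (hkn k) β
    · exact hInt2 α _ (hkn l)
    · exact hInt1 α β
  -- pointwise integrand identity
  have hIgrand : ∀ X : (Fin (n + M) → ℝ) × (Fin (n + M) → ℝ),
      cmmIntegrand (n + M) wL wR ω (fun XL XR => ∏ α : Fin M, ∏ i : Fin (n + M),
        (z α - (XL i : ℂ))⁻¹ * (w α - (XR i : ℂ))⁻¹) X
      = (DeltaC z * DeltaC w)⁻¹ *
        ((∏ i, wL (X.1 i) * wR (X.2 i)) * (Matrix.of fun i j => a i (X.1 j)).det *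
          (Matrix.of fun i j => ω (X.1 i) (X.2 j)).det *
          (Matrix.of fun i j => b i (X.2 j)).det) := by
    intro X
    by_cases hW : (∏ i, wL (X.1 i) * wR (X.2 i)) = 0
    · simp only [cmmIntegrand]
      rw [hW]
      ring
    · have hWn : ∀ i, wL (X.1 i) ≠ 0 ∧ wR (X.2 i) ≠ 0 := by
        intro i
        have := Finset.prod_ne_zero_iff.mp hW i (Finset.mem_univ i)
        exact ⟨left_ne_zero_of_mul this, right_ne_zero_of_mul this⟩
      have hzx : ∀ (α : Fin M) (j : Fin (n + M)), z α ≠ ((X.1 j : ℝ) : ℂ) := by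
        intro α j hzz
        have hRb : ¬ R < |X.1 j| := fun hlt => (hWn j).1 (hsuppL _ hlt)
        have hle : ‖z α‖ ≤ R := by
          rw [hzz, Complex.norm_real, Real.norm_eq_abs]
          exact not_lt.mp hRb
        exact absurd (hzR α) (not_lt.mpr hle)
      have hwy : ∀ (α : Fin M) (j : Fin (n + M)), w α ≠ ((X.2 j : ℝ) : ℂ) := by
        intro α j hzz
        have hRb : ¬ R < |X.2 j| := fun hlt => (hWn j).2 (hsuppR _ hlt)
        have hle : ‖w α‖ ≤ R := by
          rw [hzz, Complex.norm_real, Real.norm_eq_abs]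
          exact not_lt.mp hRb
        exact absurd (hwRad α) (not_lt.mpr hle)
      have hx := cv_identity (fun k : Fin n => P (k : ℕ)) (fun k => hP _ (hkn k)) z hz X.1 hzx
      have hy := cv_identity (fun k : Fin n => Q (k : ℕ)) (fun k => hQ _ (hkn k)) w hw X.2 hwy
      set Vx : ℂ := ∏ i, ∏ j ∈ Finset.Ioi i, ((X.1 j : ℂ) - (X.1 i : ℂ)) with hVxd
      set Vy : ℂ := ∏ i, ∏ j ∈ Finset.Ioi i, ((X.2 j : ℂ) - (X.2 i : ℂ)) with hVyd
      set Px : ℂ := ∏ j, ∏ α, (z α - (X.1 j : ℂ)) with hPxd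
      set Py : ℂ := ∏ j, ∏ α, (w α - (X.2 j : ℂ)) with hPyd
      set sg : ℂ := ∏ i : Fin (n + M), ∏ j ∈ Finset.Ioi i, (-1 : ℂ) with hsgd
      have hs2 : sg * sg = 1 := by
        rw [hsgd, ← Finset.prod_mul_distrib]
        rw [Finset.prod_congr rfl fun i (_ : i ∈ Finset.univ) =>
          (Finset.prod_mul_distrib (s := Finset.Ioi i)
            (f := fun _ => (-1 : ℂ)) (g := fun _ => (-1 : ℂ))).symm]
        simp
      have hPxne : Px ≠ 0 := by
        rw [hPxd]
        exact Finset.prod_ne_zero_iff.mpr fun j _ => Finset.prod_ne_zero_iff.mpr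
          fun α _ => sub_ne_zero.mpr (hzx α j)
      have hPyne : Py ≠ 0 := by
        rw [hPyd]
        exact Finset.prod_ne_zero_iff.mpr fun j _ => Finset.prod_ne_zero_iff.mpr
          fun α _ => sub_ne_zero.mpr (hwy α j)
      have hDx : Delta X.1 = sg * Vx := by
        rw [Delta, hsgd, hVxd, ← Finset.prod_mul_distrib]
        refine Finset.prod_congr rfl fun i _ => ?_
        rw [← Finset.prod_mul_distrib]
        exact Finset.prod_congr rfl fun j _ => by ring
      have hDy : Delta X.2 = sg * Vy := by
        rw [Delta, hsgd, hVyd, ← Finset.prod_mul_distrib]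
        refine Finset.prod_congr rfl fun i _ => ?_
        rw [← Finset.prod_mul_distrib]
        exact Finset.prod_congr rfl fun j _ => by ring
      have hdAx : (Matrix.of fun i j => a i (X.1 j)).det = DeltaC z * Vx * Px⁻¹ := by
        have hAmatch : (Matrix.of fun i j => a i (X.1 j)) = (Matrix.of fun i j =>
            Sum.elim (fun k : Fin n => (P (k : ℕ)).eval ((X.1 j : ℝ) : ℂ))
              (fun α => (z α - ((X.1 j : ℝ) : ℂ))⁻¹) (finSumFinEquiv.symm i)) := by
          ext i j
          rcases hsi : finSumFinEquiv.symm i with k | α <;>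
            simp only [hadef, hsi, Sum.elim_inl, Sum.elim_inr, Matrix.of_apply]
        rw [hAmatch, eq_mul_inv_iff_mul_eq₀ hPxne]
        exact hx
      have hdAy : (Matrix.of fun i j => b i (X.2 j)).det = DeltaC w * Vy * Py⁻¹ := by
        have hAmatch : (Matrix.of fun i j => b i (X.2 j)) = (Matrix.of fun i j =>
            Sum.elim (fun k : Fin n => (Q (k : ℕ)).eval ((X.2 j : ℝ) : ℂ))
              (fun α => (w α - ((X.2 j : ℝ) : ℂ))⁻¹) (finSumFinEquiv.symm i)) := by
          ext i j
          rcases hsi : finSumFinEquiv.symm i with k | α <;>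
            simp only [hbdef, hsi, Sum.elim_inl, Sum.elim_inr, Matrix.of_apply]
        rw [hAmatch, eq_mul_inv_iff_mul_eq₀ hPyne]
        exact hy
      have hO : (∏ α : Fin M, ∏ i : Fin (n + M),
          (z α - (X.1 i : ℂ))⁻¹ * (w α - (X.2 i : ℂ))⁻¹) = Px⁻¹ * Py⁻¹ := by
        rw [hPxd, hPyd, Finset.prod_comm (f := fun j (α : Fin M) => z α - (X.1 j : ℂ)),
          Finset.prod_comm (f := fun j (α : Fin M) => w α - (X.2 j : ℂ))]
        simp only [Finset.prod_mul_distrib, ← Finset.prod_inv_distrib]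
      simp only [cmmIntegrand]
      rw [hO, hDx, hDy, hdAx, hdAy]
      set dω : ℂ := (Matrix.of fun i j => ω (X.1 i) (X.2 j)).det with hdω
      set W : ℂ := ∏ i, wL (X.1 i) * wR (X.2 i) with hWd
      calc Px⁻¹ * Py⁻¹ * W * (sg * Vx) * dω * (sg * Vy)
          = (sg * sg) * (Px⁻¹ * Py⁻¹ * W * Vx * dω * Vy) := by ring
        _ = Px⁻¹ * Py⁻¹ * W * Vx * dω * Vy := by rw [hs2, one_mul]
        _ = ((DeltaC z * DeltaC w)⁻¹ * (DeltaC z * DeltaC w)) *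
              (Px⁻¹ * Py⁻¹ * W * Vx * dω * Vy) := by
            rw [inv_mul_cancel₀ (mul_ne_zero hDz hDw), one_mul]
        _ = (DeltaC z * DeltaC w)⁻¹ *
              (W * (DeltaC z * Vx * Px⁻¹) * dω * (DeltaC w * Vy * Py⁻¹)) := by ring
  -- integrate
  simp only [cmmAvg]
  simp only [hIgrand]
  rw [MeasureTheory.integral_const_mul, andreief wL wR ω a b hInt]
  -- block determinant reduction
  set Dm : Matrix (Fin n) (Fin n) ℂ := Matrix.diagonal (fun k : Fin n => h (k : ℕ)) with hDmd
  set U : Matrix (Fin n) (Fin M) ℂ := Matrix.of fun k β =>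
    pairing wL wR ω (fun x => (P (k : ℕ)).eval (x : ℂ)) (fun y => (w β - (y : ℂ))⁻¹) with hUd
  set V : Matrix (Fin M) (Fin n) ℂ := Matrix.of fun α l =>
    pairing wL wR ω (fun x => (z α - (x : ℂ))⁻¹) (fun y => (Q (l : ℕ)).eval (y : ℂ)) with hVd
  set K : Matrix (Fin M) (Fin M) ℂ := Matrix.of fun α β =>
    pairing wL wR ω (fun x => (z α - (x : ℂ))⁻¹) (fun y => (w β - (y : ℂ))⁻¹) with hKd
  have hGsub : (Matrix.of fun i j => pairing wL wR ω (a i) (b j)) =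
      (Matrix.fromBlocks Dm U V K).submatrix finSumFinEquiv.symm finSumFinEquiv.symm := by
    ext i j
    rcases hsi : finSumFinEquiv.symm i with k | α <;>
      rcases hsj : finSumFinEquiv.symm j with l | β <;>
      simp only [Matrix.submatrix_apply, hsi, hsj, Matrix.fromBlocks_apply₁₁,
        Matrix.fromBlocks_apply₁₂, Matrix.fromBlocks_apply₂₁, Matrix.fromBlocks_apply₂₂,
        Matrix.of_apply, hadef, hbdef, Sum.elim_inl, Sum.elim_inr, hDmd, hUd, hVd, hKd]
    · rw [hbo _ (hkn k) _ (hkn l)]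
      by_cases hkl : (k : ℕ) = (l : ℕ)
      · have hkl2 : k = l := Fin.ext hkl
        subst hkl2
        rw [if_pos rfl, Matrix.diagonal_apply_eq]
      · rw [if_neg hkl,
          Matrix.diagonal_apply_ne _ fun hkl2 => hkl (congrArg Fin.val hkl2)]
  have hfac : (((n + M).factorial : ℂ)) ^ 2 ≠ 0 :=
    pow_ne_zero _ (Nat.cast_ne_zero.mpr (Nat.factorial_ne_zero _))
  letI : Invertible Dm := ⟨Matrix.diagonal (fun k : Fin n => (h (k : ℕ))⁻¹), by
      rw [hDmd, Matrix.diagonal_mul_diagonal,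
        show (fun k : Fin n => (h (k : ℕ))⁻¹ * h (k : ℕ)) = fun _ => 1 from
          funext fun k => inv_mul_cancel₀ (hh _ (hkn k))]
      exact Matrix.diagonal_one, by
      rw [hDmd, Matrix.diagonal_mul_diagonal,
        show (fun k : Fin n => h (k : ℕ) * (h (k : ℕ))⁻¹) = fun _ => 1 from
          funext fun k => mul_inv_cancel₀ (hh _ (hkn k))]
      exact Matrix.diagonal_one⟩
  rw [hGsub, Matrix.det_submatrix_equiv_self, Matrix.det_fromBlocks₁₁]
  have hinv : (⅟Dm : Matrix (Fin n) (Fin n) ℂ) =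
      Matrix.diagonal (fun k : Fin n => (h (k : ℕ))⁻¹) := rfl
  rw [hinv]
  have hSchur : K - V * Matrix.diagonal (fun k : Fin n => (h (k : ℕ))⁻¹) * U =
      Matrix.of (fun α β : Fin M =>
        pairing wL wR ω (fun x => (z α - (x : ℂ))⁻¹) (fun y => (w β - (y : ℂ))⁻¹)
          - ∑ i ∈ Finset.range n, (h i)⁻¹ *
              (pairing wL wR ω (fun x => (z α - (x : ℂ))⁻¹)
                (fun y => (Q i).eval (y : ℂ)) *
               pairing wL wR ω (fun x => (P i).eval (x : ℂ))
                (fun y => (w β - (y : ℂ))⁻¹))) := by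
    ext α β
    simp only [Matrix.sub_apply, hKd, Matrix.of_apply]
    congr 1
    rw [Matrix.mul_assoc, Matrix.mul_apply]
    rw [← Fin.sum_univ_eq_sum_range (fun i => (h i)⁻¹ *
      (pairing wL wR ω (fun x => (z α - (x : ℂ))⁻¹) (fun y => (Q i).eval (y : ℂ)) *
       pairing wL wR ω (fun x => (P i).eval (x : ℂ)) (fun y => (w β - (y : ℂ))⁻¹))) n]
    refine Finset.sum_congr rfl fun k _ => ?_
    rw [Matrix.diagonal_mul]
    simp only [hVd, hUd, Matrix.of_apply]
    ring
  rw [hSchur, hDmd, Matrix.det_diagonal,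
    Fin.prod_univ_eq_prod_range (fun i => h i) n, div_eq_mul_inv]
  have hfin : ∀ A B C : ℂ, A⁻¹ * (B * (A * C)) = B * C * (A⁻¹ * A) := by
    intro A B C; ring
  rw [hfin, inv_mul_cancel₀ hfac, mul_one]
  ring
end

section
/- Coupled polynomial ensemble partition function as a determinant: Let N ≥ 1, let f_{L,0},…,f_{L,N−1} : ℝ → ℂ be measurable functions, and let q_0,…,q_{N−1} be monic polynomials with deg q_k = k. Assuming all the integrals below are absolutely convergent, Z_{N,f_L} := (1/N!²) ∫_{ℝ^N×ℝ^N} (∏_{i=1}^N w_R(x_{R,i})) · det_{1≤i,j≤N}( f_{L,N−i}(x_{L,j}) ) · det_{1≤i,j≤N} ω(x_{L,i}, x_{R,j}) · Δ_N(X_R) dX_L dX_R = det_{1≤i,j≤N}( ⟨f_{L,N−i}|ω|q_{N−j}⟩_R ), where ⟨f|ω|g⟩_R = ∫_{ℝ²} w_R(y) f(x) ω(x,y) g(y) dx dy. -/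
open MeasureTheory Matrix Finset

/-- Integrand of the one-sided pairing `⟨f|ω|g⟩_R = ∫ w_R(y) f(x) ω(x,y) g(y) dx dy`. -/
noncomputable def pairingRIntegrand (wR : ℝ → ℂ) (ω : ℝ → ℝ → ℂ) (f g : ℝ → ℂ) :
    ℝ × ℝ → ℂ :=
  fun s => wR s.2 * f s.1 * ω s.1 s.2 * g s.2

/-- The one-sided pairing `⟨f|ω|g⟩_R = ∫ w_R(y) f(x) ω(x,y) g(y) dx dy`. -/
noncomputable def pairingR (wR : ℝ → ℂ) (ω : ℝ → ℝ → ℂ) (f g : ℝ → ℂ) : ℂ :=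
  ∫ s : ℝ × ℝ, pairingRIntegrand wR ω f g s

/-- Integrand of the coupled polynomial ensemble partition function `Z_{N,f_L}`. -/
noncomputable def peIntegrand (N : ℕ) (wR : ℝ → ℂ) (ω : ℝ → ℝ → ℂ) (f : ℕ → ℝ → ℂ) :
    (Fin N → ℝ) × (Fin N → ℝ) → ℂ :=
  fun X => (∏ i, wR (X.2 i)) *
    (Matrix.of fun i j : Fin N => f (N - 1 - (i : ℕ)) (X.1 j)).det *
    (Matrix.of fun i j => ω (X.1 i) (X.2 j)).det * Delta X.2

lemma aux_prod_rev {N : ℕ} (g : Fin N → Fin N → ℂ) :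
    (∏ i, ∏ j ∈ Finset.Ioi i, g (Fin.rev j) (Fin.rev i)) = ∏ i, ∏ j ∈ Finset.Ioi i, g i j := by
  rw [Finset.prod_sigma', Finset.prod_sigma']
  refine Finset.prod_nbij' (fun p => ⟨Fin.rev p.2, Fin.rev p.1⟩)
    (fun p => ⟨Fin.rev p.2, Fin.rev p.1⟩) ?_ ?_ ?_ ?_ ?_
  · rintro ⟨i, j⟩ h
    simp only [Finset.mem_sigma, Finset.mem_univ, Finset.mem_Ioi, true_and] at h ⊢
    exact Fin.rev_lt_rev.mpr h
  · rintro ⟨i, j⟩ h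
    simp only [Finset.mem_sigma, Finset.mem_univ, Finset.mem_Ioi, true_and] at h ⊢
    exact Fin.rev_lt_rev.mpr h
  · rintro ⟨i, j⟩ _; simp [Fin.rev_rev]
  · rintro ⟨i, j⟩ _; simp [Fin.rev_rev]
  · rintro ⟨i, j⟩ _; rfl

lemma delta_eq_detQ {N : ℕ} (q : ℕ → Polynomial ℂ)
    (hq : ∀ k < N, (q k).Monic ∧ (q k).natDegree = k) (x : Fin N → ℝ) :
    Delta x = (Matrix.of fun i j : Fin N => (q (N - 1 - (i : ℕ))).eval ((x j : ℂ))).det := by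
  set v : Fin N → ℂ := fun i => (x i : ℂ) with hv
  set P : Matrix (Fin N) (Fin N) ℂ := Matrix.of fun i j : Fin N => (q (j : ℕ)).eval (v i) with hP
  have h1 : (Matrix.vandermonde v).det = P.det :=
    Matrix.det_eval_matrixOfPolynomials_eq_det_vandermonde v (fun j => q (j : ℕ))
      (fun i => (hq i i.isLt).2) (fun i => (hq i i.isLt).1)
  have h2 : (Matrix.of fun i j : Fin N => (q (N - 1 - (i : ℕ))).eval (v j))
      = (P.transpose).submatrix (Fin.revPerm : Equiv.Perm (Fin N)) id := by
    ext i j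
    have h : N - 1 - (i : ℕ) = N - ((i : ℕ) + 1) := by omega
    simp [P, Matrix.submatrix, Fin.val_rev, Matrix.transpose, h]
  have h3 : Matrix.vandermonde (v ∘ Fin.rev)
      = (Matrix.vandermonde v).submatrix (Fin.revPerm : Equiv.Perm (Fin N)) id := by
    ext i j; simp [Matrix.vandermonde]
  have h4 : (Matrix.of fun i j : Fin N => (q (N - 1 - (i : ℕ))).eval (v j)).det
      = (Matrix.vandermonde (v ∘ Fin.rev)).det := by
    rw [h2, h3, Matrix.det_permute, Matrix.det_permute, Matrix.det_transpose, h1]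
  rw [h4, Matrix.det_vandermonde]
  show (∏ i, ∏ j ∈ Finset.Ioi i, (v i - v j)) = _
  rw [← aux_prod_rev (fun a b => v a - v b)]
  rfl

lemma sum_perm_triple {N : ℕ} (M : Matrix (Fin N) (Fin N) ℂ) :
    (∑ τ : Equiv.Perm (Fin N), ∑ ρ : Equiv.Perm (Fin N), ∑ σ : Equiv.Perm (Fin N),
      (((Equiv.Perm.sign τ : ℤ) * (Equiv.Perm.sign ρ : ℤ) * (Equiv.Perm.sign σ : ℤ) : ℤ) : ℂ) *
        ∏ i, M (σ i) (τ (ρ i)))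
    = ((N.factorial : ℂ)) ^ 2 * M.det := by
  have key : ∀ τ ρ : Equiv.Perm (Fin N),
      (∑ σ : Equiv.Perm (Fin N),
        (((Equiv.Perm.sign τ : ℤ) * (Equiv.Perm.sign ρ : ℤ) * (Equiv.Perm.sign σ : ℤ) : ℤ) : ℂ) *
          ∏ i, M (σ i) (τ (ρ i))) = M.det := by
    intro τ ρ
    have := Fintype.sum_equiv ((Equiv.inv (Equiv.Perm (Fin N))).trans (Equiv.mulRight (τ * ρ)))
      (fun π : Equiv.Perm (Fin N) => (((Equiv.Perm.sign π : ℤ) : ℂ) * ∏ j, M j (π j)))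
      (fun σ : Equiv.Perm (Fin N) =>
        (((Equiv.Perm.sign τ : ℤ) * (Equiv.Perm.sign ρ : ℤ) * (Equiv.Perm.sign σ : ℤ) : ℤ) : ℂ) *
          ∏ i, M (σ i) (τ (ρ i))) ?_
    · rw [← this]
      rw [← Matrix.det_transpose M, Matrix.det_apply']
      rfl
    · intro π
      simp only [Equiv.trans_apply, Equiv.inv_apply, Equiv.coe_mulRight]
      have hsign : ((Equiv.Perm.sign τ : ℤ) * (Equiv.Perm.sign ρ : ℤ) *
          (Equiv.Perm.sign (π⁻¹ * (τ * ρ)) : ℤ) : ℤ) = (Equiv.Perm.sign π : ℤ) := by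
        simp only [Equiv.Perm.sign_mul, Equiv.Perm.sign_inv, Units.val_mul]
        rcases Int.units_eq_one_or (Equiv.Perm.sign τ) with h1 | h1 <;>
          rcases Int.units_eq_one_or (Equiv.Perm.sign ρ) with h2 | h2 <;>
          rcases Int.units_eq_one_or (Equiv.Perm.sign π) with h3 | h3 <;>
          simp [h1, h2, h3]
      have hprod : (∏ i, M ((π⁻¹ * (τ * ρ)) i) (τ (ρ i))) = ∏ j, M j (π j) := by
        rw [← Equiv.prod_comp (π⁻¹ * (τ * ρ)) (fun j => M j (π j))]
        refine Finset.prod_congr rfl fun i _ => ?_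
        simp [Equiv.Perm.mul_apply]
      rw [hprod, hsign]
  calc (∑ τ : Equiv.Perm (Fin N), ∑ ρ : Equiv.Perm (Fin N), ∑ σ : Equiv.Perm (Fin N),
      (((Equiv.Perm.sign τ : ℤ) * (Equiv.Perm.sign ρ : ℤ) * (Equiv.Perm.sign σ : ℤ) : ℤ) : ℂ) *
        ∏ i, M (σ i) (τ (ρ i)))
      = ∑ _τ : Equiv.Perm (Fin N), ∑ _ρ : Equiv.Perm (Fin N), M.det := by
        refine Finset.sum_congr rfl fun τ _ => Finset.sum_congr rfl fun ρ _ => key τ ρ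
    _ = ((N.factorial : ℂ)) ^ 2 * M.det := by
        simp [Finset.sum_const, Finset.card_univ, Fintype.card_perm, Fintype.card_fin]
        ring

lemma term_integral {N : ℕ} (ρ : Equiv.Perm (Fin N)) (g : Fin N → ℝ × ℝ → ℂ)
    (hg : ∀ i, Integrable (g i)) :
    Integrable (fun X : (Fin N → ℝ) × (Fin N → ℝ) => ∏ i, g i (X.1 i, X.2 (ρ i))) ∧
    (∫ X : (Fin N → ℝ) × (Fin N → ℝ), ∏ i, g i (X.1 i, X.2 (ρ i)))
      = ∏ i, ∫ s : ℝ × ℝ, g i s := by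
  have m1 : MeasurePreserving (MeasurableEquiv.arrowProdEquivProdArrow ℝ ℝ (Fin N))
      volume volume := by
    have := measurePreserving_arrowProdEquivProdArrow ℝ ℝ (Fin N)
      (fun _ => (volume : Measure ℝ)) (fun _ => (volume : Measure ℝ))
    simpa [MeasureTheory.volume_pi, MeasureTheory.Measure.volume_eq_prod] using this
  have m2 : MeasurePreserving
      ((MeasurableEquiv.refl (Fin N → ℝ)).prodCongr
        (MeasurableEquiv.piCongrLeft (fun _ => ℝ) (ρ : Fin N ≃ Fin N))) volume volume := by
    have := (MeasurePreserving.id (volume : Measure (Fin N → ℝ))).prod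
      (volume_measurePreserving_piCongrLeft (fun _ => ℝ) (ρ : Fin N ≃ Fin N))
    exact this
  set e := (MeasurableEquiv.arrowProdEquivProdArrow ℝ ℝ (Fin N)).trans
      ((MeasurableEquiv.refl (Fin N → ℝ)).prodCongr
        (MeasurableEquiv.piCongrLeft (fun _ => ℝ) (ρ : Fin N ≃ Fin N))) with he
  have mp : MeasurePreserving e volume volume := m2.comp m1
  have hcomp : ∀ v : Fin N → ℝ × ℝ,
      (fun X : (Fin N → ℝ) × (Fin N → ℝ) => ∏ i, g i (X.1 i, X.2 (ρ i))) (e v)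
        = ∏ i, g i (v i) := by
    intro v
    refine Finset.prod_congr rfl fun i _ => ?_
    have h1 : (e v).1 i = (v i).1 := rfl
    have h2 : (e v).2 (ρ i) = (v i).2 := by
      show (Equiv.piCongrLeft (fun _ => ℝ) (ρ : Fin N ≃ Fin N)) (fun k => (v k).2) (ρ i) = (v i).2
      exact Equiv.piCongrLeft_apply_apply (fun _ => ℝ) (ρ : Fin N ≃ Fin N) (fun k => (v k).2) i
    rw [h1, h2]
  have hint : Integrable (fun v : Fin N → ℝ × ℝ => ∏ i, g i (v i)) :=
    MeasureTheory.Integrable.fintype_prod hg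
  constructor
  · rw [← mp.integrable_comp_emb (MeasurableEquiv.measurableEmbedding e)]
    simpa [Function.comp_def, hcomp] using hint
  · rw [← mp.integral_comp']
    calc (∫ v : Fin N → ℝ × ℝ, (fun X : (Fin N → ℝ) × (Fin N → ℝ) =>
            ∏ i, g i (X.1 i, X.2 (ρ i))) (e v))
        = ∫ v : Fin N → ℝ × ℝ, ∏ i, g i (v i) :=
          integral_congr_ae (Filter.Eventually.of_forall hcomp)
      _ = ∏ i, ∫ s : ℝ × ℝ, g i s := MeasureTheory.integral_fintype_prod_eq_prod (ι := Fin N) _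

lemma peIntegrand_expand {N : ℕ} (wR : ℝ → ℂ) (ω : ℝ → ℝ → ℂ) (f : ℕ → ℝ → ℂ)
    (q : ℕ → Polynomial ℂ) (hq : ∀ k < N, (q k).Monic ∧ (q k).natDegree = k)
    (X : (Fin N → ℝ) × (Fin N → ℝ)) :
    peIntegrand N wR ω f X
      = ∑ τ : Equiv.Perm (Fin N), ∑ ρ : Equiv.Perm (Fin N), ∑ σ : Equiv.Perm (Fin N),
        (((Equiv.Perm.sign τ : ℤ) * (Equiv.Perm.sign ρ : ℤ) * (Equiv.Perm.sign σ : ℤ) : ℤ) : ℂ) *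
          ∏ i, pairingRIntegrand wR ω (f (N - 1 - ((σ i : ℕ))))
            (fun y => (q (N - 1 - ((τ (ρ i) : ℕ)))).eval (y : ℂ)) (X.1 i, X.2 (ρ i)) := by
  unfold peIntegrand
  rw [delta_eq_detQ q hq X.2]
  rw [← Matrix.det_transpose (Matrix.of fun i j : Fin N => ω (X.1 i) (X.2 j))]
  rw [Matrix.det_apply' (Matrix.of fun i j : Fin N => f (N - 1 - (i : ℕ)) (X.1 j)),
    Matrix.det_apply', Matrix.det_apply']
  simp only [Finset.mul_sum, Finset.sum_mul]
  refine Finset.sum_congr rfl fun τ _ => Finset.sum_congr rfl fun ρ _ =>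
    Finset.sum_congr rfl fun σ _ => ?_
  simp only [Matrix.of_apply, Matrix.transpose_apply, pairingRIntegrand]
  rw [Finset.prod_mul_distrib, Finset.prod_mul_distrib, Finset.prod_mul_distrib]
  rw [← Equiv.prod_comp ρ (fun i => wR (X.2 i))]
  rw [← Equiv.prod_comp ρ (fun j => (q (N - 1 - ((τ j : ℕ)))).eval ((X.2 j : ℂ)))]
  push_cast
  ring

/-- **Coupled polynomial ensemble partition function as a determinant.** For measurable
functions `f_{L,0},…,f_{L,N−1}` and monic polynomials `q_0,…,q_{N−1}` with `deg q_k = k`,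
assuming all integrals are absolutely convergent,
`Z_{N,f_L} = det( ⟨f_{L,N−i}|ω|q_{N−j}⟩_R )`. -/
theorem pe_partition_function_det (N : ℕ) (hN : 1 ≤ N)
    (wR : ℝ → ℂ) (ω : ℝ → ℝ → ℂ)
    (hwR : Measurable wR) (hω : Measurable (Function.uncurry ω))
    (f : ℕ → ℝ → ℂ) (hf : ∀ k < N, Measurable (f k))
    (q : ℕ → Polynomial ℂ)
    (hq : ∀ k < N, (q k).Monic ∧ (q k).natDegree = k)
    (hZ : Integrable (peIntegrand N wR ω f))
    (hpair : ∀ i < N, ∀ j < N, Integrable (pairingRIntegrand wR ω (f i)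
      (fun y => (q j).eval (y : ℂ)))) :
    ((N.factorial : ℂ) ^ 2)⁻¹ * ∫ X : (Fin N → ℝ) × (Fin N → ℝ), peIntegrand N wR ω f X
      = (Matrix.of fun i j : Fin N =>
          pairingR wR ω (f (N - 1 - (i : ℕ)))
            (fun y => (q (N - 1 - (j : ℕ))).eval (y : ℂ))).det := by
  have hlt : ∀ i : Fin N, N - 1 - (i : ℕ) < N :=
    fun i => lt_of_le_of_lt (Nat.sub_le _ _) (Nat.sub_lt (Nat.lt_of_lt_of_le Nat.zero_lt_one hN)
      Nat.zero_lt_one)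
  set Mmat : Matrix (Fin N) (Fin N) ℂ := Matrix.of fun i j : Fin N =>
    pairingR wR ω (f (N - 1 - (i : ℕ))) (fun y => (q (N - 1 - (j : ℕ))).eval (y : ℂ)) with hM
  have hGint : ∀ a b : Fin N, Integrable (pairingRIntegrand wR ω (f (N - 1 - (a : ℕ)))
      (fun y => (q (N - 1 - (b : ℕ))).eval (y : ℂ))) :=
    fun a b => hpair _ (hlt a) _ (hlt b)
  have hterm := fun (τ ρ σ : Equiv.Perm (Fin N)) =>
    term_integral ρ (fun i => pairingRIntegrand wR ω (f (N - 1 - ((σ i : ℕ))))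
      (fun y => (q (N - 1 - ((τ (ρ i) : ℕ)))).eval (y : ℂ))) (fun i => hGint _ _)
  have E1 : ∀ τ ρ σ : Equiv.Perm (Fin N), Integrable (fun X : (Fin N → ℝ) × (Fin N → ℝ) =>
      (((Equiv.Perm.sign τ : ℤ) * (Equiv.Perm.sign ρ : ℤ) * (Equiv.Perm.sign σ : ℤ) : ℤ) : ℂ) *
        ∏ i, pairingRIntegrand wR ω (f (N - 1 - ((σ i : ℕ))))
          (fun y => (q (N - 1 - ((τ (ρ i) : ℕ)))).eval (y : ℂ)) (X.1 i, X.2 (ρ i))) :=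
    fun τ ρ σ => ((hterm τ ρ σ).1).const_mul _
  have hint1 : (∫ X : (Fin N → ℝ) × (Fin N → ℝ), peIntegrand N wR ω f X)
      = ∑ τ : Equiv.Perm (Fin N), ∑ ρ : Equiv.Perm (Fin N), ∑ σ : Equiv.Perm (Fin N),
        (((Equiv.Perm.sign τ : ℤ) * (Equiv.Perm.sign ρ : ℤ) * (Equiv.Perm.sign σ : ℤ) : ℤ) : ℂ) *
          ∏ i, Mmat (σ i) (τ (ρ i)) := by
    rw [show (fun X : (Fin N → ℝ) × (Fin N → ℝ) => peIntegrand N wR ω f X)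
        = fun X : (Fin N → ℝ) × (Fin N → ℝ) =>
          ∑ τ : Equiv.Perm (Fin N), ∑ ρ : Equiv.Perm (Fin N), ∑ σ : Equiv.Perm (Fin N),
          (((Equiv.Perm.sign τ : ℤ) * (Equiv.Perm.sign ρ : ℤ) * (Equiv.Perm.sign σ : ℤ) : ℤ) : ℂ) *
            ∏ i, pairingRIntegrand wR ω (f (N - 1 - ((σ i : ℕ))))
              (fun y => (q (N - 1 - ((τ (ρ i) : ℕ)))).eval (y : ℂ)) (X.1 i, X.2 (ρ i))
      from funext (peIntegrand_expand wR ω f q hq)]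
    rw [integral_finset_sum _ (fun τ _ => integrable_finset_sum _ (fun ρ _ =>
      integrable_finset_sum _ (fun σ _ => E1 τ ρ σ)))]
    refine Finset.sum_congr rfl fun τ _ => ?_
    rw [integral_finset_sum _ (fun ρ _ => integrable_finset_sum _ (fun σ _ => E1 τ ρ σ))]
    refine Finset.sum_congr rfl fun ρ _ => ?_
    rw [integral_finset_sum _ (fun σ _ => E1 τ ρ σ)]
    refine Finset.sum_congr rfl fun σ _ => ?_
    rw [MeasureTheory.integral_const_mul, (hterm τ ρ σ).2]
    exact congrArg _ (Finset.prod_congr rfl fun i _ => rfl)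
  rw [hint1, sum_perm_triple Mmat, ← mul_assoc, inv_mul_cancel₀, one_mul]
  exact pow_ne_zero 2 (Nat.cast_ne_zero.mpr (Nat.factorial_ne_zero N))
end
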